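/- arXiv:2212.11193 — 6 statements merged into one kernel-verified Lean document; each statement's English description precedes it below -/
import Mathlib

section
/- Let F be a field, ω a weight function assigning nonzero scalars to permutations, and W ≤ M_n(F) a linear subspace. Then the maximal ω-rank of a matrix in W is at least ν_b(B(W)), where B(W) = {q(A) : 0 ≠ A ∈ W} is the set of lexicographically minimal support positions of nonzero matrices in W. -/
open Matrix

/-- A bipartite matching: all first coordinates distinct, all second coordinates distinct. -/
def IsBipMatching {n : ℕ} (B₀ : Finset (Fin n × Fin n)) : Prop :=
  ∀ p ∈ B₀, ∀ q ∈ B₀, p ≠ q → p.1 ≠ q.1 ∧ p.2 ≠ q.2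

/-- The bipartite matching number of a set of positions. -/
noncomputable def nuB {n : ℕ} (B : Set (Fin n × Fin n)) : ℕ :=
  sSup {m | ∃ B₀ : Finset (Fin n × Fin n), ↑B₀ ⊆ B ∧ IsBipMatching B₀ ∧ B₀.card = m}

/-- The Schur functional `D_ω`. -/
def Dw {F : Type*} [Field F] (ω : ∀ m : ℕ, Equiv.Perm (Fin m) → F) {m : ℕ}
    (A : Matrix (Fin m) (Fin m) F) : F :=
  ∑ σ : Equiv.Perm (Fin m), ω m σ * ∏ i, A i (σ i)

/-- The ω-rank: the largest k such that some k×k submatrix B has `D_ω B ≠ 0`. -/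
noncomputable def rkw {F : Type*} [Field F] (ω : ∀ m : ℕ, Equiv.Perm (Fin m) → F) {n : ℕ}
    (A : Matrix (Fin n) (Fin n) F) : ℕ :=
  sSup {k | ∃ I J : Fin k → Fin n, StrictMono I ∧ StrictMono J ∧
    Dw ω (A.submatrix I J) ≠ 0}

/-- The permanent. -/
def per {F : Type*} [Field F] {m : ℕ} (A : Matrix (Fin m) (Fin m) F) : F :=
  ∑ σ : Equiv.Perm (Fin m), ∏ i, A i (σ i)

/-- The permanental rank. -/
noncomputable def prk {F : Type*} [Field F] {n : ℕ} (A : Matrix (Fin n) (Fin n) F) : ℕ :=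
  sSup {k | ∃ I J : Fin k → Fin n, StrictMono I ∧ StrictMono J ∧
    per (A.submatrix I J) ≠ 0}

/-- Lexicographic (row-major) order on positions. -/
def LexLt {n : ℕ} (p q : Fin n × Fin n) : Prop :=
  p.1 < q.1 ∨ (p.1 = q.1 ∧ p.2 < q.2)

/-- `BW W` is the set of lexicographically minimal support positions of nonzero matrices in `W`. -/
def BW {F : Type*} [Field F] {n : ℕ} (W : Submodule F (Matrix (Fin n) (Fin n) F)) :
    Set (Fin n × Fin n) :=
  {p | ∃ A ∈ W, A ≠ 0 ∧ A p.1 p.2 ≠ 0 ∧ ∀ q, LexLt q p → A q.1 q.2 = 0}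

/-- Alternating matrix: `A = -Aᵗ` and zero diagonal. -/
def IsAlt {F : Type*} [Field F] {n : ℕ} (A : Matrix (Fin n) (Fin n) F) : Prop :=
  Aᵀ = -A ∧ ∀ i, A i i = 0

/-- A matching in a graph: pairwise disjoint edges. -/
def IsGraphMatching {n : ℕ} (M : Finset (Sym2 (Fin n))) : Prop :=
  ∀ e ∈ M, ∀ f ∈ M, e ≠ f → ∀ x : Fin n, x ∈ e → x ∉ f

/-- The matching number of a graph. -/
noncomputable def nuG {n : ℕ} (G : Set (Sym2 (Fin n))) : ℕ :=
  sSup {m | ∃ M : Finset (Sym2 (Fin n)), ↑M ⊆ G ∧ IsGraphMatching M ∧ M.card = m}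

/-- `GU U`: edges `{i,j}` arising as lexicographically minimal support positions in `U`. -/
def GU {F : Type*} [Field F] {n : ℕ} (U : Submodule F (Matrix (Fin n) (Fin n) F)) :
    Set (Sym2 (Fin n)) :=
  {e | ∃ A ∈ U, ∃ i j : Fin n, A ≠ 0 ∧ A i j ≠ 0 ∧
    (∀ q : Fin n × Fin n, LexLt q (i, j) → A q.1 q.2 = 0) ∧ e = Sym2.mk i j}


lemma stmt2_core {F : Type*} [Field F] {n M : ℕ} (W : Submodule F (Matrix (Fin n) (Fin n) F))
    (J : Fin M → Fin n) (hJ : StrictMono J) :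
    ∀ (m : ℕ) (w : (Fin m → Fin M) → F) (I : Fin m → Fin n) (_hI : StrictMono I)
      (t : Fin m → Fin M) (hwt : w t ≠ 0)
      (hinj : ∀ σ, w σ ≠ 0 → Function.Injective σ)
      (hdom : ∀ σ, Function.Injective σ → (∀ k, t k ≤ σ k) → σ ≠ t → w σ = 0)
      (A : Fin m → Matrix (Fin n) (Fin n) F) (hAW : ∀ k, A k ∈ W)
      (hA1 : ∀ k, A k (I k) (J (t k)) ≠ 0)
      (hA0 : ∀ k r c, LexLt (r, c) (I k, J (t k)) → A k r c = 0),
    ∃ C ∈ W, ∑ σ : Fin m → Fin M, w σ * ∏ k, C (I k) (J (σ k)) ≠ 0 := by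
  intro m
  induction m with
  | zero =>
    intro w I hI t hwt hinj hdom A hAW hA1 hA0
    refine ⟨0, W.zero_mem, ?_⟩
    have : ∀ σ : Fin 0 → Fin M, σ = t := fun σ => funext fun k => k.elim0
    rw [Fintype.sum_eq_single t (fun σ hσ => absurd (this σ) hσ)]
    simpa using hwt
  | succ m ih =>
    intro w I hI t hwt hinj hdom A hAW hA1 hA0
    set L := Fin.last m with hL
    set a : Fin M → F := fun j => A L (I L) (J j) with ha
    -- zero of `a` below target
    have ha0 : ∀ j, j < t L → a j = 0 := by
      intro j hj
      exact hA0 L (I L) (J j) (Or.inr ⟨rfl, hJ hj⟩)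
    -- A L vanishes on earlier rows entirely
    have hrow : ∀ (k : Fin m) (c : Fin n), A L (I k.castSucc) c = 0 := by
      intro k c
      exact hA0 L _ c (Or.inl (hI (Fin.castSucc_lt_last k)))
    set w' : (Fin m → Fin M) → F := fun σ' => ∑ j : Fin M, w (Fin.snoc σ' j) * a j with hw'
    set t' : Fin m → Fin M := fun k => t k.castSucc with ht'
    have hsnoc_t : Fin.snoc t' (t L) = t := by
      funext k
      refine Fin.lastCases ?_ (fun i => ?_) k
      · simp [hL]
      · simp [ht']
    -- w' t' ≠ 0
    have hwt' : w' t' ≠ 0 := by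
      have : w' t' = w t * a (t L) := by
        simp only [hw']
        rw [Finset.sum_eq_single (t L)]
        · rw [hsnoc_t]
        · intro j _ hj
          rcases lt_trichotomy j (t L) with h | h | h
          · rw [ha0 j h, mul_zero]
          · exact absurd h hj
          · by_cases hinj2 : Function.Injective (Fin.snoc t' j)
            · rw [hdom _ hinj2 ?_ ?_, zero_mul]
              · intro k
                refine Fin.lastCases ?_ (fun i => ?_) k
                · simpa using h.le
                · simp [ht']
              · intro hc
                have h5 := congrFun hc L
                rw [hL, Fin.snoc_last] at h5
                exact hj h5
            · rw [of_not_not (fun h2 => hinj2 (hinj _ h2)), zero_mul]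
        · intro h; exact absurd (Finset.mem_univ _) h
      rw [this]
      exact mul_ne_zero hwt (hA1 L)
    have hinj' : ∀ σ', w' σ' ≠ 0 → Function.Injective σ' := by
      intro σ' hne
      by_contra hni
      apply hne
      rw [hw']
      apply Finset.sum_eq_zero
      intro j _
      have : ¬ Function.Injective (Fin.snoc σ' j) := by
        intro h
        apply hni
        intro x y hxy
        have h4 : Fin.snoc (α := fun _ => Fin M) σ' j x.castSucc
            = Fin.snoc (α := fun _ => Fin M) σ' j y.castSucc := by
          rw [Fin.snoc_castSucc, Fin.snoc_castSucc]; exact hxy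
        exact Fin.castSucc_injective _ (h h4)
      rw [of_not_not (fun h2 => this (hinj _ h2)), zero_mul]
    have hdom' : ∀ σ', Function.Injective σ' → (∀ k, t' k ≤ σ' k) → σ' ≠ t' → w' σ' = 0 := by
      intro σ' hi hge hne
      rw [hw']
      apply Finset.sum_eq_zero
      intro j _
      rcases lt_or_ge j (t L) with h | h
      · rw [ha0 j h, mul_zero]
      · by_cases hinj2 : Function.Injective (Fin.snoc σ' j)
        · rw [hdom _ hinj2 ?_ ?_, zero_mul]
          · intro k
            refine Fin.lastCases ?_ (fun i => ?_) k
            · simpa using h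
            · simpa [ht'] using hge i
          · intro hc
            apply hne
            funext k
            have := congrFun hc k.castSucc
            simpa [ht'] using this
        · rw [of_not_not (fun h2 => hinj2 (hinj _ h2)), zero_mul]
    obtain ⟨C', hC'W, hD'⟩ := ih w' (fun k => I k.castSucc) (hI.comp (Fin.strictMono_castSucc))
      t' hwt' hinj' hdom' (fun k => A k.castSucc) (fun k => hAW _) (fun k => hA1 k.castSucc)
      (fun k r c h => hA0 k.castSucc r c h)
    -- key identity
    have key : ∀ lam : F,
        ∑ σ : Fin (m+1) → Fin M, w σ * ∏ k, (C' + lam • A L) (I k) (J (σ k))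
        = (∑ σ : Fin (m+1) → Fin M, w σ * ∏ k, C' (I k) (J (σ k)))
          + lam * ∑ σ' : Fin m → Fin M, w' σ' * ∏ k, C' (I k.castSucc) (J (σ' k)) := by
      intro lam
      have expand : ∀ σ : Fin (m+1) → Fin M,
          (∏ k, (C' + lam • A L) (I k) (J (σ k)))
          = (∏ k : Fin m, C' (I k.castSucc) (J (σ k.castSucc)))
            * (C' (I L) (J (σ L)) + lam * a (σ L)) := by
        intro σ
        have e1 : ∀ k : Fin m, (C' + lam • A L) (I k.castSucc) (J (σ k.castSucc))
            = C' (I k.castSucc) (J (σ k.castSucc)) := by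
          intro k
          simp [Matrix.add_apply, Matrix.smul_apply, hrow k, smul_eq_mul]
        have e2 : (C' + lam • A L) (I L) (J (σ L)) = C' (I L) (J (σ L)) + lam * a (σ L) := by
          simp [Matrix.add_apply, Matrix.smul_apply, smul_eq_mul, ha]
        rw [Fin.prod_univ_castSucc, e2, Finset.prod_congr rfl (fun k _ => e1 k)]
      have expand0 : ∀ σ : Fin (m+1) → Fin M,
          (∏ k, C' (I k) (J (σ k)))
          = (∏ k : Fin m, C' (I k.castSucc) (J (σ k.castSucc))) * C' (I L) (J (σ L)) := by
        intro σ
        rw [Fin.prod_univ_castSucc]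
      calc ∑ σ : Fin (m+1) → Fin M, w σ * ∏ k, (C' + lam • A L) (I k) (J (σ k))
          = ∑ σ : Fin (m+1) → Fin M, (w σ * ∏ k, C' (I k) (J (σ k))
              + lam * (w σ * ((∏ k : Fin m, C' (I k.castSucc) (J (σ k.castSucc))) * a (σ L)))) := by
            apply Finset.sum_congr rfl
            intro σ _
            rw [expand σ, expand0 σ]
            ring
        _ = (∑ σ : Fin (m+1) → Fin M, w σ * ∏ k, C' (I k) (J (σ k)))
              + lam * ∑ σ : Fin (m+1) → Fin M,
                  w σ * ((∏ k : Fin m, C' (I k.castSucc) (J (σ k.castSucc))) * a (σ L)) := by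
            rw [Finset.sum_add_distrib, Finset.mul_sum]
        _ = _ := by
            congr 1
            congr 1
            rw [← (Fin.snocEquiv (fun _ => Fin M)).sum_comp]
            rw [Fintype.sum_prod_type]
            rw [Finset.sum_comm]
            apply Finset.sum_congr rfl
            intro σ' _
            rw [hw', Finset.sum_mul]
            apply Finset.sum_congr rfl
            intro j _
            have h1 : (Fin.snocEquiv (fun _ => Fin M) (j, σ')) = Fin.snoc σ' j := rfl
            rw [h1]
            have h2 : ∀ k : Fin m, Fin.snoc (α := fun _ => Fin M) σ' j k.castSucc = σ' k := by
              intro k; simp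
            have h3 : Fin.snoc (α := fun _ => Fin M) σ' j L = j := by simp [hL]
            rw [h3]
            rw [Finset.prod_congr rfl fun k _ => by rw [h2 k]]
            ring
    by_cases h0 : ∑ σ : Fin (m+1) → Fin M, w σ * ∏ k, C' (I k) (J (σ k)) = 0
    · refine ⟨C' + (1 : F) • A L, W.add_mem hC'W (W.smul_mem _ (hAW L)), ?_⟩
      rw [key 1, h0]
      simpa using hD'
    · exact ⟨C', hC'W, h0⟩

lemma stmt2_step {F : Type*} [Field F] {n : ℕ}
    (ω : ∀ m : ℕ, Equiv.Perm (Fin m) → F) (hω : ∀ m σ, ω m σ ≠ 0)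
    (W : Submodule F (Matrix (Fin n) (Fin n) F)) (B₀ : Finset (Fin n × Fin n))
    (hsub : ↑B₀ ⊆ BW W) (hmat : IsBipMatching B₀) {m : ℕ} (hcard : B₀.card = m) :
    ∃ C ∈ W, ∃ I J : Fin m → Fin n, StrictMono I ∧ StrictMono J ∧
      (∑ e : Equiv.Perm (Fin m), ω m e * ∏ k, C (I k) (J (e k))) ≠ 0 := by
  classical
  have hfst : ∀ p ∈ B₀, ∀ q ∈ B₀, p.1 = q.1 → p = q := by
    intro p hp q hq h
    by_contra hne
    exact (hmat p hp q hq hne).1 h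
  have hsnd : ∀ p ∈ B₀, ∀ q ∈ B₀, p.2 = q.2 → p = q := by
    intro p hp q hq h
    by_contra hne
    exact (hmat p hp q hq hne).2 h
  have hfst' : Set.InjOn Prod.fst (B₀ : Set (Fin n × Fin n)) :=
    fun p hp q hq h => hfst p (Finset.mem_coe.mp hp) q (Finset.mem_coe.mp hq) h
  have hsnd' : Set.InjOn Prod.snd (B₀ : Set (Fin n × Fin n)) :=
    fun p hp q hq h => hsnd p (Finset.mem_coe.mp hp) q (Finset.mem_coe.mp hq) h
  set rows := B₀.image Prod.fst with hrows
  set cols := B₀.image Prod.snd with hcols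
  have hr : rows.card = m := by rw [hrows, Finset.card_image_of_injOn hfst', hcard]
  have hc : cols.card = m := by rw [hcols, Finset.card_image_of_injOn hsnd', hcard]
  set eI := rows.orderIsoOfFin hr with heI
  set eJ := cols.orderIsoOfFin hc with heJ
  set I : Fin m → Fin n := fun k => (eI k : Fin n) with hIdef
  set J : Fin m → Fin n := fun k => (eJ k : Fin n) with hJdef
  have hI : StrictMono I := fun a b h => Subtype.coe_lt_coe.mpr (eI.strictMono h)
  have hJ : StrictMono J := fun a b h => Subtype.coe_lt_coe.mpr (eJ.strictMono h)
  have hp' : ∀ k : Fin m, ∃ q ∈ B₀, q.1 = I k := by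
    intro k
    have : I k ∈ rows := (eI k).2
    rw [hrows] at this
    simpa using Finset.mem_image.mp this
  choose p hpB hp1 using hp'
  have hpcol : ∀ k, (p k).2 ∈ cols := fun k => Finset.mem_image_of_mem Prod.snd (hpB k)
  set t : Fin m → Fin m := fun k => eJ.symm ⟨(p k).2, hpcol k⟩ with htdef
  have hJt : ∀ k, J (t k) = (p k).2 := by
    intro k
    simp only [hJdef, htdef, OrderIso.apply_symm_apply]
  have hpk : ∀ k, (I k, J (t k)) = p k := fun k => Prod.ext (hp1 k).symm (hJt k)
  have htinj : Function.Injective t := by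
    intro k k' h
    have h2 : (p k).2 = (p k').2 := by rw [← hJt k, ← hJt k', h]
    have h3 : p k = p k' := hsnd _ (hpB k) _ (hpB k') h2
    have h4 : I k = I k' := by rw [← hp1 k, ← hp1 k', h3]
    exact hI.injective h4
  have htb : Function.Bijective t := Finite.injective_iff_bijective.mp htinj
  set w : (Fin m → Fin m) → F :=
    fun σ => if h : Function.Bijective σ then ω m (Equiv.ofBijective σ h) else 0 with hwdef
  have hwt : w t ≠ 0 := by
    rw [hwdef]
    simp only [dif_pos htb]
    exact hω m _
  have hinj : ∀ σ, w σ ≠ 0 → Function.Injective σ := by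
    intro σ hσ
    by_contra hni
    apply hσ
    rw [hwdef]
    exact dif_neg (fun hb => hni hb.1)
  have hdom : ∀ σ, Function.Injective σ → (∀ k, t k ≤ σ k) → σ ≠ t → w σ = 0 := by
    intro σ hi hge hne
    exfalso
    have hσb : Function.Bijective σ := Finite.injective_iff_bijective.mp hi
    have hs1 : ∑ k, ((σ k : ℕ)) = ∑ j : Fin m, (j : ℕ) :=
      Fintype.sum_bijective σ hσb _ _ (fun k => rfl)
    have hs2 : ∑ k, ((t k : ℕ)) = ∑ j : Fin m, (j : ℕ) :=
      Fintype.sum_bijective t htb _ _ (fun k => rfl)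
    obtain ⟨k0, hk0⟩ : ∃ k, t k ≠ σ k := by
      by_contra hall
      push_neg at hall
      exact hne (funext fun k => (hall k).symm)
    have hlt : ∑ k, ((t k : ℕ)) < ∑ k, ((σ k : ℕ)) := by
      apply Finset.sum_lt_sum (fun k _ => by exact_mod_cast hge k)
      exact ⟨k0, Finset.mem_univ _, by exact_mod_cast lt_of_le_of_ne (hge k0) hk0⟩
    omega
  have hBW : ∀ k, p k ∈ BW W := fun k => hsub (hpB k)
  choose A hAW hAne hA1' hA0' using hBW
  have hA1 : ∀ k, A k (I k) (J (t k)) ≠ 0 := by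
    intro k
    rw [← hp1 k, hJt k]
    exact hA1' k
  have hA0 : ∀ k r c, LexLt (r, c) (I k, J (t k)) → A k r c = 0 := by
    intro k r c h
    rw [hpk k] at h
    exact hA0' k (r, c) h
  obtain ⟨C, hCW, hD⟩ := stmt2_core W J hJ m w I hI t hwt hinj hdom A hAW hA1 hA0
  refine ⟨C, hCW, I, J, hI, hJ, ?_⟩
  intro h0
  apply hD
  rw [← h0]
  set T := (Finset.univ : Finset (Equiv.Perm (Fin m))).image
    (fun e : Equiv.Perm (Fin m) => (⇑e : Fin m → Fin m)) with hT
  have hzero : ∀ σ ∈ Finset.univ, σ ∉ T → w σ * ∏ k, C (I k) (J (σ k)) = 0 := by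
    intro σ _ hσT
    have : ¬ Function.Bijective σ := by
      intro hb
      apply hσT
      rw [hT]
      exact Finset.mem_image.mpr ⟨Equiv.ofBijective σ hb, Finset.mem_univ _,
        funext fun x => Equiv.ofBijective_apply σ hb x⟩
    rw [hwdef]
    simp only [dif_neg this, zero_mul]
  rw [← Finset.sum_subset (Finset.subset_univ T) hzero]
  rw [hT, Finset.sum_image (fun e _ e' _ h => Equiv.coe_fn_injective h)]
  apply Finset.sum_congr rfl
  intro e _
  congr 1
  rw [hwdef]
  simp only [dif_pos e.bijective]
  congr 1
  exact Equiv.ext fun x => rfl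

theorem stmt2 {F : Type*} [Field F] {n : ℕ}
    (ω : ∀ m : ℕ, Equiv.Perm (Fin m) → F) (hω : ∀ m σ, ω m σ ≠ 0)
    (W : Submodule F (Matrix (Fin n) (Fin n) F)) :
    nuB (BW W) ≤ sSup {r | ∃ A ∈ W, rkw ω A = r} := by
  classical
  have hkn : ∀ {k : ℕ} (I : Fin k → Fin n), StrictMono I → k ≤ n := by
    intro k I hI
    simpa using Fintype.card_le_of_injective I hI.injective
  have hbdd1 : ∀ X : Matrix (Fin n) (Fin n) F,
      BddAbove {k | ∃ I J : Fin k → Fin n, StrictMono I ∧ StrictMono J ∧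
        Dw ω (X.submatrix I J) ≠ 0} := by
    intro X
    exact ⟨n, fun k hk => by obtain ⟨I, J, hI, _, _⟩ := hk; exact hkn I hI⟩
  have hrle : ∀ X : Matrix (Fin n) (Fin n) F, rkw ω X ≤ n := by
    intro X
    apply csSup_le'
    intro k hk
    obtain ⟨I, J, hI, _, _⟩ := hk
    exact hkn I hI
  have hbdd2 : BddAbove {r | ∃ A ∈ W, rkw ω A = r} := by
    refine ⟨n, fun r hr => ?_⟩
    obtain ⟨A, _, hA⟩ := hr
    exact hA ▸ hrle A
  apply csSup_le'
  intro m hm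
  obtain ⟨B₀, hsub, hmat, hcard⟩ := hm
  obtain ⟨C, hCW, I, J, hI, hJ, hD⟩ := stmt2_step ω hω W B₀ hsub hmat hcard
  have hmem : m ∈ {k | ∃ I J : Fin k → Fin n, StrictMono I ∧ StrictMono J ∧
      Dw ω (C.submatrix I J) ≠ 0} := by
    refine ⟨I, J, hI, hJ, ?_⟩
    simpa [Dw, Matrix.submatrix_apply] using hD
  have h1 : m ≤ rkw ω C := le_csSup (hbdd1 C) hmem
  have h2 : rkw ω C ≤ sSup {r | ∃ A ∈ W, rkw ω A = r} :=
    le_csSup hbdd2 ⟨C, hCW, rfl⟩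
  exact h1.trans h2
end

section
/- Let F be a field and W ≤ M_n(F) a linear subspace. Then the maximal usual rank of a matrix in W is at least ν_b(B(W)), where B(W) is the set of lexicographically minimal support positions of nonzero matrices in W. -/
open Matrix

section AuxStmt3
open Finset

lemma aux_inj_le_eq_id {m : ℕ} (φ : Fin m → Fin m) (hinj : Function.Injective φ)
    (hle : ∀ i, φ i ≤ i) : ∀ i, φ i = i := by
  have hb : Function.Bijective φ := Finite.injective_iff_bijective.mp hinj
  have hsum : ∑ i : Fin m, ((φ i : ℕ)) = ∑ i : Fin m, (i : ℕ) :=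
    Equiv.sum_comp (Equiv.ofBijective φ hb) (fun i : Fin m => (i : ℕ))
  have h := (Finset.sum_eq_sum_iff_of_le (s := Finset.univ)
    (f := fun i : Fin m => ((φ i : ℕ))) (g := fun i : Fin m => (i : ℕ))
    (fun i _ => hle i)).mp hsum
  intro i
  exact Fin.ext (h i (Finset.mem_univ i))

lemma aux_sum_compl {m : ℕ} (F : Type*) [Field F] (R : Finset (Fin m)) :
    (∑ S ∈ (Finset.univ : Finset (Fin m)).powerset,
      if R ⊆ S then (-1 : F) ^ (Sᶜ.card) else 0) = if R = Finset.univ then 1 else 0 := by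
  classical
  rw [← Finset.sum_filter]
  have hbij : ∑ S ∈ (Finset.univ : Finset (Fin m)).powerset.filter (fun S => R ⊆ S),
      (-1 : F) ^ (Sᶜ.card) = ∑ T ∈ Rᶜ.powerset, (-1 : F) ^ (T.card) := by
    refine Finset.sum_nbij' (fun S => Sᶜ) (fun T => Tᶜ) ?_ ?_ ?_ ?_ ?_
    · intro S hS
      simp only [Finset.mem_filter, Finset.mem_powerset] at hS ⊢
      exact Finset.compl_subset_compl.mpr hS.2
    · intro T hT
      simp only [Finset.mem_powerset] at hT
      simp only [Finset.mem_filter, Finset.mem_powerset]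
      exact ⟨Finset.subset_univ _, by
        have := Finset.compl_subset_compl.mpr hT
        simpa using this⟩
    · intro S _; simp
    · intro T _; simp
    · intro S _; simp
  rw [hbij]
  have hz := Finset.sum_powerset_neg_one_pow_card (x := Rᶜ)
  have : ((∑ T ∈ Rᶜ.powerset, (-1 : ℤ) ^ T.card : ℤ) : F)
      = ∑ T ∈ Rᶜ.powerset, (-1 : F) ^ T.card := by push_cast; rfl
  rw [← this, hz]
  have hcompl : (Rᶜ = (∅ : Finset (Fin m))) ↔ R = Finset.univ := by
    constructor
    · intro h; simpa using congrArg (·ᶜ) h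
    · intro h; simp [h]
  split_ifs with h1 h2 h2 <;> simp_all

lemma aux_exists_rank {F : Type*} [Field F] {n m : ℕ}
    (W : Submodule F (Matrix (Fin n) (Fin n) F))
    (r c : Fin m → Fin n) (hr : StrictMono r) (hc : Function.Injective c)
    (A : Fin m → Matrix (Fin n) (Fin n) F) (hAW : ∀ k, A k ∈ W)
    (hAd : ∀ k, A k (r k) (c k) ≠ 0)
    (hAlex : ∀ k q, LexLt q (r k, c k) → A k q.1 q.2 = 0) :
    ∃ A₀ ∈ W, m ≤ A₀.rank := by
  classical
  -- the triangular matrix T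
  set T : Matrix (Fin m) (Fin m) F := Matrix.of fun i j => A i (r i) (c j) with hT
  have hTzero : ∀ i j : Fin m, c j < c i → T i j = 0 := by
    intro i j h
    exact hAlex i (r i, c j) (Or.inr ⟨rfl, h⟩)
  have hdetT : T.det ≠ 0 := by
    set σ := Tuple.sort c with hσ
    have hmono : StrictMono (c ∘ σ) :=
      (Tuple.monotone_sort c).strictMono_of_injective (hc.comp σ.injective)
    rw [← Matrix.det_submatrix_equiv_self σ T]
    rw [Matrix.det_of_upperTriangular (M := T.submatrix σ σ) ?ht]
    case ht =>
      intro i j hij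
      exact hTzero (σ i) (σ j) (hmono hij)
    · refine Finset.prod_ne_zero_iff.mpr fun i _ => ?_
      exact hAd (σ i)
  -- D φ
  set D : (Fin m → Fin m) → F := fun φ => (Matrix.of fun i j => A (φ i) (r i) (c j)).det with hD
  -- submatrix sums
  set MS : Finset (Fin m) → Matrix (Fin m) (Fin m) F :=
    fun S => Matrix.of fun i j => ∑ k ∈ S, A k (r i) (c j) with hMS
  have step1 : ∀ S : Finset (Fin m), (MS S).det
      = ∑ φ ∈ Fintype.piFinset (fun _ : Fin m => S), D φ := by
    intro S
    have h0 : MS S = fun i => ∑ k ∈ S, (fun j => A k (r i) (c j)) := by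
      ext i j
      simp [hMS, Finset.sum_apply]
    show Matrix.detRowAlternating (MS S) = _
    rw [h0]
    exact (Matrix.detRowAlternating (R := F) (n := Fin m)).toMultilinearMap.map_sum_finset
      (g := fun i k => (fun j : Fin m => A k (r i) (c j))) (A := fun _ : Fin m => S)
  -- the alternating sum identity
  have key : (∑ S ∈ (Finset.univ : Finset (Fin m)).powerset,
      (-1 : F) ^ (Sᶜ.card) * (MS S).det) = T.det := by
    have hfilter : ∀ S : Finset (Fin m),
        Fintype.piFinset (fun _ : Fin m => S)
        = (Fintype.piFinset (fun _ : Fin m => (Finset.univ : Finset (Fin m)))).filter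
            (fun φ => Finset.image φ Finset.univ ⊆ S) := by
      intro S
      ext φ
      simp [Fintype.mem_piFinset, Finset.image_subset_iff]
    calc (∑ S ∈ (Finset.univ : Finset (Fin m)).powerset, (-1 : F) ^ (Sᶜ.card) * (MS S).det)
        = ∑ S ∈ (Finset.univ : Finset (Fin m)).powerset,
            ∑ φ ∈ Fintype.piFinset (fun _ : Fin m => (Finset.univ : Finset (Fin m))),
              (if Finset.image φ Finset.univ ⊆ S then (-1 : F) ^ (Sᶜ.card) else 0) * D φ := by
          refine Finset.sum_congr rfl fun S _ => ?_
          rw [step1 S, hfilter S, Finset.sum_filter, Finset.mul_sum]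
          refine Finset.sum_congr rfl fun φ _ => ?_
          split_ifs <;> ring
      _ = ∑ φ ∈ Fintype.piFinset (fun _ : Fin m => (Finset.univ : Finset (Fin m))),
            (∑ S ∈ (Finset.univ : Finset (Fin m)).powerset,
              if Finset.image φ Finset.univ ⊆ S then (-1 : F) ^ (Sᶜ.card) else 0) * D φ := by
          rw [Finset.sum_comm]
          refine Finset.sum_congr rfl fun φ _ => ?_
          rw [Finset.sum_mul]
      _ = ∑ φ ∈ Fintype.piFinset (fun _ : Fin m => (Finset.univ : Finset (Fin m))),
            (if Finset.image φ Finset.univ = Finset.univ then (1 : F) else 0) * D φ := by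
          refine Finset.sum_congr rfl fun φ _ => ?_
          rw [aux_sum_compl F (Finset.image φ Finset.univ)]
      _ = T.det := by
          rw [Finset.sum_eq_single (fun i : Fin m => i)]
          · simp [hD, hT]
          · intro φ hφ hne
            by_cases hsurj : Finset.image φ Finset.univ = Finset.univ
            · -- φ is surjective hence bijective
              have hs : Function.Surjective φ := by
                intro b
                have hb : b ∈ Finset.image φ Finset.univ := by rw [hsurj]; exact Finset.mem_univ b
                obtain ⟨a, _, ha⟩ := Finset.mem_image.mp hb
                exact ⟨a, ha⟩
              have hinj : Function.Injective φ := Finite.injective_iff_surjective.mpr hs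
              by_cases hle : ∀ i, φ i ≤ i
              · exact absurd (funext (aux_inj_le_eq_id φ hinj hle)) hne
              · push_neg at hle
                obtain ⟨i, hlt⟩ := hle
                have : D φ = 0 := by
                  apply Matrix.det_eq_zero_of_row_eq_zero i
                  intro j
                  exact hAlex (φ i) (r i, c j) (Or.inl (hr hlt))
                rw [this, mul_zero]
            · rw [if_neg hsurj, zero_mul]
          · intro h
            exact absurd (Fintype.mem_piFinset.mpr fun i => Finset.mem_univ _) h
  -- extract a good S
  have hex : ∃ S ∈ (Finset.univ : Finset (Fin m)).powerset, (MS S).det ≠ 0 := by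
    by_contra hcon
    push_neg at hcon
    rw [Finset.sum_eq_zero (fun S hS => by rw [hcon S hS, mul_zero])] at key
    exact hdetT key.symm
  obtain ⟨S, _, hSdet⟩ := hex
  refine ⟨∑ k ∈ S, A k, Submodule.sum_mem W (fun k _ => hAW k), ?_⟩
  have hsub : (∑ k ∈ S, A k).submatrix r c = MS S := by
    ext i j
    simp [hMS, Matrix.sum_apply]
  have hunit : IsUnit ((∑ k ∈ S, A k).submatrix r c) := by
    rw [hsub]
    exact (Matrix.isUnit_iff_isUnit_det _).mpr hSdet.isUnit
  have hrank : ((∑ k ∈ S, A k).submatrix r c).rank = m := by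
    rw [Matrix.rank_of_isUnit _ hunit, Fintype.card_fin]
  set A₀ := ∑ k ∈ S, A k with hA₀
  have hfac : A₀.submatrix r c
      = ((1 : Matrix (Fin n) (Fin n) F).submatrix r id)
        * (A₀ * ((1 : Matrix (Fin n) (Fin n) F).submatrix id c)) := by
    ext i j
    simp [Matrix.mul_apply, Matrix.one_apply, Finset.sum_ite_eq, Finset.sum_ite_eq']
  calc m = (A₀.submatrix r c).rank := hrank.symm
    _ ≤ (A₀ * ((1 : Matrix (Fin n) (Fin n) F).submatrix id c)).rank := by
        rw [hfac]; exact Matrix.rank_mul_le_right _ _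
    _ ≤ A₀.rank := Matrix.rank_mul_le_left _ _

end AuxStmt3

theorem stmt3 {F : Type*} [Field F] {n : ℕ}
    (W : Submodule F (Matrix (Fin n) (Fin n) F)) :
    nuB (BW W) ≤ sSup {r | ∃ A ∈ W, A.rank = r} := by
  classical
  apply csSup_le
  · exact ⟨0, ∅, by simp, by intro p hp; exact absurd hp (Finset.notMem_empty p), rfl⟩
  rintro m ⟨B₀, hsub, hmatch, rfl⟩
  have hinj1 : Set.InjOn Prod.fst (↑B₀ : Set (Fin n × Fin n)) := by
    intro p hp q hq h
    by_contra hne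
    exact (hmatch p (Finset.mem_coe.mp hp) q (Finset.mem_coe.mp hq) hne).1 h
  have hcardR : (B₀.image Prod.fst).card = B₀.card := Finset.card_image_of_injOn hinj1
  set e := (B₀.image Prod.fst).orderIsoOfFin hcardR with he
  have hex : ∀ i, ∃ p, p ∈ B₀ ∧ p.1 = ((e i : {x // x ∈ B₀.image Prod.fst}) : Fin n) := by
    intro i
    rcases Finset.mem_image.mp (e i).2 with ⟨p, hp, hp1⟩
    exact ⟨p, hp, hp1⟩
  choose p hp hp1 using hex
  set r := fun i => (p i).1 with hrdef
  set c := fun i => (p i).2 with hcdef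
  have hr : StrictMono r := by
    intro i j hij
    show (p i).1 < (p j).1
    rw [hp1 i, hp1 j]
    exact Subtype.coe_lt_coe.mpr (e.strictMono hij)
  have hc : Function.Injective c := by
    intro i j h
    by_cases hpe : p i = p j
    · apply e.injective
      apply Subtype.ext
      rw [← hp1 i, ← hp1 j, hpe]
    · exact absurd h (hmatch _ (hp i) _ (hp j) hpe).2
  have hBWmem : ∀ i, ∃ A, A ∈ W ∧ A ≠ 0 ∧ A (r i) (c i) ≠ 0 ∧
      ∀ q, LexLt q (r i, c i) → A q.1 q.2 = 0 := by
    intro i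
    have hmem : (r i, c i) ∈ BW W := by
      have h2 : p i ∈ BW W := hsub (Finset.mem_coe.mpr (hp i))
      exact h2
    obtain ⟨A, hAW, h0, hd, hlex⟩ := hmem
    exact ⟨A, hAW, h0, hd, hlex⟩
  choose A hAW hA0 hAd hAlex using hBWmem
  obtain ⟨A₀, hA₀W, hrk⟩ := aux_exists_rank W r c hr hc A hAW hAd hAlex
  have hbdd : BddAbove {r | ∃ A ∈ W, A.rank = r} := by
    refine ⟨n, ?_⟩
    rintro x ⟨B, _, rfl⟩
    exact B.rank_le_width
  exact hrk.trans (le_csSup hbdd ⟨A₀, hA₀W, rfl⟩)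
end

section
/- Let F be a field, B ⊆ [n]×[n], and k ≥ 0. The maximum dimension of a linear subspace W ≤ M_B(F) with rank(A) ≤ k for all A ∈ W equals the maximum of |B'| over subsets B' ⊆ B with bipartite matching number ν_b(B') ≤ k. -/
open Matrix

section AuxLemmas

open Finset

variable {F : Type*} [Field F]

lemma pick_indep {V : Type*} [AddCommGroup V] [Module F V] [FiniteDimensional F V]
    {n r : ℕ} (v : Fin n → V)
    (h : r ≤ Module.finrank F (Submodule.span F (Set.range v))) :
    ∃ J : Fin r → Fin n, Function.Injective J ∧ LinearIndependent F (fun s => v (J s)) := by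
  classical
  obtain ⟨b, hbsub, hbspan, hbind⟩ := exists_linearIndependent F (Set.range v)
  have hbfin : b.Finite := LinearIndependent.setFinite hbind
  haveI : Fintype b := hbfin.fintype
  have hcard : Module.finrank F (Submodule.span F b) = b.toFinset.card :=
    finrank_span_set_eq_card hbind
  have hr : r ≤ Fintype.card b := by
    rw [← hbspan] at h
    rw [Set.toFinset_card] at hcard
    omega
  -- choose preimages
  have hpre : ∀ x : b, ∃ j : Fin n, v j = (x : V) := fun x => hbsub x.2
  choose g hg using hpre
  have hginj : Function.Injective g := by
    intro x y hxy
    apply Subtype.ext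
    rw [← hg x, ← hg y, hxy]
  let e : Fin (Fintype.card b) ≃ b := (Fintype.equivFin b).symm
  refine ⟨fun s => g (e (Fin.castLE hr s)), ?_, ?_⟩
  · intro s t hst
    exact Fin.castLE_injective hr (e.injective (hginj hst))
  · have : (fun s : Fin r => v (g (e (Fin.castLE hr s)))) =
        (fun s : Fin r => ((e (Fin.castLE hr s) : V))) := by
      funext s; rw [hg]
    rw [this]
    exact hbind.comp _ (fun s t hst => (Fin.castLE_injective hr) (e.injective hst))

lemma sum_powerset_neg_one {α : Type*} [DecidableEq α] (x : Finset α) :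
    ∑ S ∈ x.powerset, (-1 : F)^S.card = if x = ∅ then 1 else 0 := by
  have h := Finset.sum_powerset_neg_one_pow_card (x := x)
  have h2 := congrArg (fun z : ℤ => (z : F)) h
  simp only [Int.cast_sum, Int.cast_pow, Int.cast_neg, Int.cast_one, Int.cast_ite,
    Int.cast_zero] at h2
  exact h2

lemma sum_ie {α : Type*} [Fintype α] [DecidableEq α] (T : Finset α) :
    ∑ S ∈ (Finset.univ : Finset α).powerset,
        (if T ⊆ S then (-1:F)^(Fintype.card α - S.card) else 0)
      = if T = Finset.univ then 1 else 0 := by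
  rw [← Finset.sum_filter]
  have key : ∑ S ∈ (Finset.univ : Finset α).powerset.filter (fun S => T ⊆ S),
      (-1:F)^(Fintype.card α - S.card) = ∑ S ∈ Tᶜ.powerset, (-1:F)^S.card := by
    refine Finset.sum_bij' (fun S _ => Sᶜ) (fun S _ => Sᶜ) ?_ ?_ ?_ ?_ ?_
    · intro S hS
      simp only [Finset.mem_filter, Finset.mem_powerset] at hS
      simpa [Finset.mem_powerset] using Finset.compl_subset_compl.mpr hS.2
    · intro S hS
      simp only [Finset.mem_powerset] at hS
      simp only [Finset.mem_filter, Finset.mem_powerset]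
      exact ⟨Finset.subset_univ _, by simpa using Finset.compl_subset_compl.mpr hS⟩
    · intro S _; simp
    · intro S _; simp
    · intro S _
      rw [Finset.card_compl]
  rw [key, sum_powerset_neg_one]
  congr 1
  simp [Finset.compl_eq_empty_iff]

lemma perm_fix {m n : ℕ} (c : Fin m → Fin n) (hc : Function.Injective c)
    (σ : Equiv.Perm (Fin m)) (h : ∀ i, c (σ i) ≤ c i) : ∀ i, σ i = i := by
  have hsum : ∑ i, ((c (σ i) : ℕ)) = ∑ i, ((c i : ℕ)) :=
    Equiv.sum_comp σ (fun i => ((c i : ℕ)))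
  have := (Finset.sum_eq_sum_iff_of_le (f := fun i => (c (σ i) : ℕ)) (g := fun i => (c i : ℕ)) (fun i _ => h i : ∀ i ∈ Finset.univ, (c (σ i) : ℕ) ≤ (c i : ℕ))).mp hsum
  intro i
  exact hc (Fin.val_injective (this i (Finset.mem_univ i)))

lemma matching_card_le {F : Type*} [Field F] {n k : ℕ}
    (W : Submodule F (Matrix (Fin n) (Fin n) F))
    (hrk : ∀ A ∈ W, A.rank ≤ k) (B₀ : Finset (Fin n × Fin n)) (hsub : ↑B₀ ⊆ BW W)
    (hm : IsBipMatching B₀) : B₀.card ≤ k := by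
  classical
  set m := B₀.card with hm0
  -- sort the matching by rows
  have hrowinj : Set.InjOn Prod.fst (↑B₀ : Set (Fin n × Fin n)) := by
    intro p hp q hq hpq
    by_contra hne
    exact (hm p hp q hq hne).1 hpq
  have hcardR : (B₀.image Prod.fst).card = m := Finset.card_image_of_injOn hrowinj
  let ρ := (B₀.image Prod.fst).orderIsoOfFin hcardR
  have hex : ∀ i : Fin m, ∃ q, q ∈ B₀ ∧ q.1 = (ρ i : Fin n) := by
    intro i
    have h2 := (ρ i).2
    simp only [Finset.mem_image] at h2
    obtain ⟨q, hq, hq2⟩ := h2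
    exact ⟨q, hq, hq2⟩
  choose p hpB hp1 using hex
  have hrmono : StrictMono (fun i => (p i).1) := by
    intro i j hij
    simp only [hp1]
    exact_mod_cast ρ.strictMono hij
  have hpinj : Function.Injective p := fun i j h => hrmono.injective (by rw [h])
  have hcinj : Function.Injective (fun i => (p i).2) := by
    intro i j hij
    by_contra hne
    exact (hm _ (hpB i) _ (hpB j) (fun h => hne (hpinj h))).2 hij
  -- witnesses from BW
  have hBW : ∀ i, p i ∈ BW W := fun i => hsub (hpB i)
  have hwit : ∀ i : Fin m, ∃ A, A ∈ W ∧ A ≠ 0 ∧ A (p i).1 (p i).2 ≠ 0 ∧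
      ∀ q, LexLt q (p i) → A q.1 q.2 = 0 := by
    intro i
    obtain ⟨A, hAW, h1, h2, h3⟩ := hBW i
    exact ⟨A, hAW, h1, h2, h3⟩
  choose A hAW hA0 hApi hAmin using hwit
  have Z1 : ∀ i t : Fin m, i < t → ∀ j, A t (p i).1 (p j).2 = 0 := by
    intro i t hit j
    exact hAmin t ((p i).1, (p j).2) (Or.inl (hrmono hit))
  have Z2 : ∀ i j : Fin m, (p j).2 < (p i).2 → A i (p i).1 (p j).2 = 0 := by
    intro i j h
    exact hAmin i ((p i).1, (p j).2) (Or.inr ⟨rfl, h⟩)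
  -- the multilinear expansion
  set D : (Fin m → Fin m) → F :=
    fun f => Matrix.det (Matrix.of fun i j => A (f i) (p i).1 (p j).2) with hD
  set MS : Finset (Fin m) → Matrix (Fin m) (Fin m) F :=
    fun S => Matrix.of fun i j => (∑ t ∈ S, A t) (p i).1 (p j).2 with hMS
  have expand : ∀ S : Finset (Fin m),
      (MS S).det = ∑ f ∈ Fintype.piFinset (fun _ : Fin m => S), D f := by
    intro S
    have h1 : (MS S) = fun i => ∑ t ∈ S, (fun j => A t (p i).1 (p j).2) := by
      funext i j
      simp [hMS, Matrix.sum_apply, Finset.sum_apply]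
    show Matrix.detRowAlternating (MS S) = _
    rw [h1]
    exact (Matrix.detRowAlternating :
      (Fin m → F) [⋀^Fin m]→ₗ[F] F).toMultilinearMap.map_sum_finset
      (fun i t => fun j => A t (p i).1 (p j).2) (fun _ => S)
  have key : ∑ S ∈ (Finset.univ : Finset (Fin m)).powerset, (-1:F)^(m - S.card) * (MS S).det
      = D id := by
    calc ∑ S ∈ (Finset.univ : Finset (Fin m)).powerset, (-1:F)^(m - S.card) * (MS S).det
        = ∑ S ∈ (Finset.univ : Finset (Fin m)).powerset,
            ∑ f ∈ Fintype.piFinset (fun _ : Fin m => S), (-1:F)^(m - S.card) * D f := by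
          refine Finset.sum_congr rfl fun S _ => ?_
          rw [expand S, Finset.mul_sum]
      _ = ∑ S ∈ (Finset.univ : Finset (Fin m)).powerset,
            ∑ f ∈ (univ : Finset (Fin m → Fin m)),
            if (univ.image f ⊆ S) then (-1:F)^(m - S.card) * D f else 0 := by
          refine Finset.sum_congr rfl fun S _ => ?_
          rw [← Finset.univ_inter (Fintype.piFinset (fun _ : Fin m => S)), ← Finset.sum_ite_mem]
          refine Finset.sum_congr rfl fun f _ => ?_
          refine if_congr ?_ rfl rfl
          rw [Fintype.mem_piFinset, Finset.image_subset_iff]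
          simp
      _ = ∑ f ∈ (univ : Finset (Fin m → Fin m)), ∑ S ∈ (Finset.univ : Finset (Fin m)).powerset,
            if (univ.image f ⊆ S) then (-1:F)^(m - S.card) * D f else 0 := Finset.sum_comm
      _ = ∑ f ∈ (univ : Finset (Fin m → Fin m)),
            (if univ.image f = univ then (1:F) else 0) * D f := by
          refine Finset.sum_congr rfl fun f _ => ?_
          have hie := sum_ie (F := F) (univ.image f)
          simp only [Fintype.card_fin] at hie
          rw [← hie, Finset.sum_mul]
          refine Finset.sum_congr rfl fun S _ => ?_
          split_ifs <;> simp
      _ = D id := by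
          rw [Finset.sum_eq_single id]
          · simp
          · intro f _ hfne
            by_cases hsurj : univ.image f = univ
            · have hfs : Function.Surjective f := by
                intro y
                have hy : y ∈ univ.image f := by rw [hsurj]; exact Finset.mem_univ y
                simp only [Finset.mem_image, Finset.mem_univ, true_and] at hy
                exact hy
              have hbij : Function.Bijective f := Finite.surjective_iff_bijective.mp hfs
              have hle : ¬ (∀ i, f i ≤ i) := by
                intro hle
                apply hfne
                funext i
                exact perm_fix (fun i : Fin m => i) (fun a b h => h)
                  (Equiv.ofBijective f hbij) hle i
              push_neg at hle
              obtain ⟨i, hi⟩ := hle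
              have hzero : D f = 0 := Matrix.det_eq_zero_of_row_eq_zero i
                (fun j => Z1 i (f i) hi j)
              rw [hzero, mul_zero]
            · simp [hsurj]
          · intro h
            exact absurd (Finset.mem_univ id) h
  -- value of D id
  have hDid : D id = ∏ i, A i (p i).1 (p i).2 := by
    show (Matrix.of fun i j => A (id i) (p i).1 (p j).2).det = _
    rw [Matrix.det_apply]
    rw [Finset.sum_eq_single (1 : Equiv.Perm (Fin m))]
    · simp
    · intro σ _ hσne
      have : ∃ i, (Matrix.of fun i j => A (id i) (p i).1 (p j).2) (σ i) i = 0 := by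
        by_contra hno
        push_neg at hno
        have hle : ∀ i, (p (σ i)).2 ≤ (p i).2 := by
          intro i
          by_contra hlt
          push_neg at hlt
          exact hno i (Z2 (σ i) i hlt)
        have : ∀ i, σ i = i := perm_fix (fun i => (p i).2) hcinj σ hle
        exact hσne (Equiv.ext this)
      obtain ⟨i, hi⟩ := this
      have hz : ∏ i : Fin m, (Matrix.of fun i j => A (id i) (p i).1 (p j).2) (σ i) i = 0 :=
        Finset.prod_eq_zero (Finset.mem_univ i) hi
      rw [hz, smul_zero]
    · intro h
      exact absurd (Finset.mem_univ _) h
  have hDne : D id ≠ 0 := by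
    rw [hDid]
    exact Finset.prod_ne_zero_iff.mpr fun i _ => hApi i
  -- some subset S has invertible restriction
  have hexS : ∃ S : Finset (Fin m), (MS S).det ≠ 0 := by
    by_contra hno
    push_neg at hno
    apply hDne
    rw [← key]
    refine Finset.sum_eq_zero fun S _ => ?_
    rw [hno S, mul_zero]
  obtain ⟨S, hSdet⟩ := hexS
  set AS : Matrix (Fin n) (Fin n) F := ∑ t ∈ S, A t with hAS
  have hASW : AS ∈ W := Submodule.sum_mem _ fun t _ => hAW t
  have hunit : IsUnit (MS S) := (Matrix.isUnit_iff_isUnit_det _).mpr (isUnit_iff_ne_zero.mpr hSdet)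
  -- columns of AS at the matched columns are linearly independent
  have hv : LinearIndependent F (fun j : Fin m => (fun i => AS i (p j).2 : Fin n → F)) := by
    rw [Fintype.linearIndependent_iff]
    intro g hg
    have hmv : (MS S).mulVec g = 0 := by
      funext i
      have := congrFun hg (p i).1
      simp only [Finset.sum_apply, Pi.smul_apply, smul_eq_mul, Pi.zero_apply] at this
      simpa [Matrix.mulVec, dotProduct, hMS, hAS, mul_comm] using this
    have hinj := Matrix.mulVec_injective_iff_isUnit.mpr hunit
    have := hinj (hmv.trans (Matrix.mulVec_zero (MS S)).symm)
    exact fun i => congrFun this i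
  have hrange : Set.range (fun j : Fin m => (fun i => AS i (p j).2 : Fin n → F))
      ⊆ Set.range ASᵀ := by
    rintro x ⟨j, rfl⟩
    exact ⟨(p j).2, rfl⟩
  have hrk2 : m ≤ AS.rank := by
    have h1 : Module.finrank F (Submodule.span F
        (Set.range (fun j : Fin m => (fun i => AS i (p j).2 : Fin n → F)))) = m := by
      rw [finrank_span_eq_card hv, Fintype.card_fin]
    rw [Matrix.rank_eq_finrank_span_cols]
    rw [← h1]
    exact Submodule.finrank_mono (Submodule.span_mono hrange)
  exact le_trans hrk2 (hrk AS hASW)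

lemma nuB_bddAbove {n : ℕ} (B : Set (Fin n × Fin n)) :
    BddAbove {m | ∃ B₀ : Finset (Fin n × Fin n), ↑B₀ ⊆ B ∧ IsBipMatching B₀ ∧ B₀.card = m} := by
  refine ⟨Fintype.card (Fin n × Fin n), ?_⟩
  rintro m ⟨B₀, _, _, rfl⟩
  exact Finset.card_le_univ B₀

/-- A matrix supported on `B'` has rank at most the bipartite matching number of `B'`. -/
lemma rank_le_nuB {F : Type*} [Field F] {n : ℕ} (A : Matrix (Fin n) (Fin n) F)
    (B' : Set (Fin n × Fin n)) (hsupp : ∀ i j, (i, j) ∉ B' → A i j = 0) :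
    A.rank ≤ nuB B' := by
  classical
  set r := A.rank with hr
  have h1 : r ≤ Module.finrank F (Submodule.span F (Set.range Aᵀ)) :=
    le_of_eq (Matrix.rank_eq_finrank_span_cols A)
  obtain ⟨J, hJinj, hJind⟩ := pick_indep Aᵀ h1
  -- the n × r matrix of chosen columns, as rows
  set A₁ : Matrix (Fin r) (Fin n) F := Matrix.of (fun s i => A i (J s)) with hA₁
  have hA₁rows : LinearIndependent F (fun s => A₁ s) := hJind
  have hA₁rank : A₁.rank = r := by
    rw [hA₁rows.rank_matrix, Fintype.card_fin]
  have h2 : r ≤ Module.finrank F (Submodule.span F (Set.range A₁ᵀ)) :=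
    le_of_eq (hA₁rank.symm.trans (Matrix.rank_eq_finrank_span_cols A₁))
  obtain ⟨I, hIinj, hIind⟩ := pick_indep A₁ᵀ h2
  set M : Matrix (Fin r) (Fin r) F := Matrix.of (fun t s => A (I t) (J s)) with hM
  have hMrows : LinearIndependent F (fun t => M t) := hIind
  have hMunit : IsUnit M := Matrix.linearIndependent_rows_iff_isUnit.mp hMrows
  have hMdet : M.det ≠ 0 := by
    have := (Matrix.isUnit_iff_isUnit_det M).mp hMunit
    exact this.ne_zero
  -- find a permutation with nonzero product
  have hexσ : ∃ σ : Equiv.Perm (Fin r), ∏ t, A (I (σ t)) (J t) ≠ 0 := by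
    by_contra hno
    push_neg at hno
    apply hMdet
    rw [Matrix.det_apply]
    refine Finset.sum_eq_zero fun σ _ => ?_
    have : ∏ i : Fin r, M (σ i) i = 0 := hno σ
    rw [this, smul_zero]
  obtain ⟨σ, hσ⟩ := hexσ
  have hfac : ∀ t, A (I (σ t)) (J t) ≠ 0 := fun t => Finset.prod_ne_zero_iff.mp hσ t (Finset.mem_univ t)
  set B₀ : Finset (Fin n × Fin n) := Finset.image (fun t => (I (σ t), J t)) univ with hB₀
  have hqinj : Function.Injective (fun t : Fin r => (I (σ t), J t)) := by
    intro t t' h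
    exact σ.injective (hIinj (congrArg Prod.fst h))
  have hcard : B₀.card = r := by
    rw [hB₀, Finset.card_image_of_injective _ hqinj, Finset.card_univ, Fintype.card_fin]
  have hsubB : ↑B₀ ⊆ B' := by
    intro q hq
    simp only [hB₀, Finset.coe_image, Set.mem_image, Finset.mem_coe, Finset.mem_univ] at hq
    obtain ⟨t, _, rfl⟩ := hq
    by_contra hnot
    exact hfac t (hsupp _ _ hnot)
  have hmatch : IsBipMatching B₀ := by
    intro a ha b hb hab
    simp only [hB₀, Finset.mem_image, Finset.mem_univ, true_and] at ha hb
    obtain ⟨t, rfl⟩ := ha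
    obtain ⟨t', rfl⟩ := hb
    have htt : t ≠ t' := fun h => hab (by rw [h])
    exact ⟨fun h => htt (σ.injective (hIinj h)), fun h => htt (hJinj h)⟩
  exact le_csSup (nuB_bddAbove B') ⟨B₀, hsubB, hmatch, hcard⟩

lemma exists_lexmin {F : Type*} [Field F] {n : ℕ} (A : Matrix (Fin n) (Fin n) F) (hA : A ≠ 0) :
    ∃ q : Fin n × Fin n, A q.1 q.2 ≠ 0 ∧ ∀ q', LexLt q' q → A q'.1 q'.2 = 0 := by
  classical
  have hne : (Finset.univ.filter fun q : Fin n × Fin n => A q.1 q.2 ≠ 0).Nonempty := by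
    by_contra h
    rw [Finset.not_nonempty_iff_eq_empty, Finset.filter_eq_empty_iff] at h
    apply hA
    ext i j
    have := h (Finset.mem_univ (i, j))
    simpa using this
  obtain ⟨q, hq, hqmin⟩ := Finset.exists_min_image _
    (fun q : Fin n × Fin n => q.1.val * n + q.2.val) hne
  simp only [Finset.mem_filter, Finset.mem_univ, true_and] at hq
  refine ⟨q, hq, fun q' hlt => ?_⟩
  by_contra h0
  have hq' : q' ∈ Finset.univ.filter fun q : Fin n × Fin n => A q.1 q.2 ≠ 0 := by
    simp [h0]
  have hkey := hqmin q' hq'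
  rcases hlt with h1 | ⟨h1, h2⟩
  · have hb : q'.2.val < n := q'.2.isLt
    have : (q'.1.val + 1) * n ≤ q.1.val * n := Nat.mul_le_mul_right n h1
    nlinarith [this]
  · rw [h1] at hkey
    omega
  
lemma finrank_le_BW {F : Type*} [Field F] {n : ℕ}
    (W : Submodule F (Matrix (Fin n) (Fin n) F)) :
    Module.finrank F W ≤ (BW W).ncard := by
  classical
  haveI : Fintype ↥(BW W) := Fintype.ofFinite _
  let φ : W →ₗ[F] (↥(BW W) → F) :=
    { toFun := fun A q => A.1 q.1.1 q.1.2
      map_add' := fun x y => by funext q; rfl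
      map_smul' := fun c x => by funext q; rfl }
  have hinj : Function.Injective φ := by
    rw [← LinearMap.ker_eq_bot, Submodule.eq_bot_iff]
    intro A hA
    rw [LinearMap.mem_ker] at hA
    by_contra hA0
    have hAne : (A : Matrix (Fin n) (Fin n) F) ≠ 0 := by
      intro h
      exact hA0 (Subtype.ext h)
    obtain ⟨q, hq1, hq2⟩ := exists_lexmin (A : Matrix (Fin n) (Fin n) F) hAne
    have hqBW : q ∈ BW W := ⟨A, A.2, hAne, hq1, hq2⟩
    have := congrFun hA ⟨q, hqBW⟩
    exact hq1 this
  calc Module.finrank F W ≤ Module.finrank F (↥(BW W) → F) :=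
        LinearMap.finrank_le_finrank_of_injective hinj
    _ = Fintype.card ↥(BW W) := Module.finrank_pi F
    _ = (BW W).ncard := by
        rw [← Nat.card_coe_set_eq, Nat.card_eq_fintype_card]

lemma exists_W {F : Type*} [Field F] {n : ℕ} (B' : Set (Fin n × Fin n)) :
    ∃ W : Submodule F (Matrix (Fin n) (Fin n) F),
      (∀ A ∈ W, ∀ i j, (i, j) ∉ B' → A i j = 0) ∧ Module.finrank F W = B'.ncard := by
  classical
  have hfin : B'.Finite := Set.toFinite B'
  set s : Finset (Fin n × Fin n) := hfin.toFinset with hs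
  set v : ↥s → Matrix (Fin n) (Fin n) F :=
    fun q => Matrix.stdBasis F (Fin n) (Fin n) (q.1.1, q.1.2) with hv
  have hvind : LinearIndependent F v := by
    apply (Matrix.stdBasis F (Fin n) (Fin n)).linearIndependent.comp
    intro x y hxy
    apply Subtype.ext
    have : (x.1.1, x.1.2) = (y.1.1, y.1.2) := hxy
    exact Prod.ext (congrArg Prod.fst this) (congrArg Prod.snd this)
  refine ⟨Submodule.span F (Set.range v), ?_, ?_⟩
  · intro A hA i j hij
    induction hA using Submodule.span_induction with
    | mem x hx =>
        obtain ⟨⟨⟨qi, qj⟩, hq⟩, rfl⟩ := hx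
        show (Matrix.stdBasis F (Fin n) (Fin n)) (qi, qj) i j = 0
        have hqB : (qi, qj) ∈ B' := by
          rw [hs] at hq
          exact hfin.mem_toFinset.mp hq
        have hne : ¬(qi = i ∧ qj = j) := by
          rintro ⟨rfl, rfl⟩
          exact hij hqB
        rw [Matrix.stdBasis_eq_single]
        exact Matrix.single_apply_of_ne _ _ _ _ _ hne
    | zero => rfl
    | add x y _ _ hx hy => rw [Matrix.add_apply, hx, hy, add_zero]
    | smul c x _ hx => rw [Matrix.smul_apply, hx, smul_zero]
  · rw [finrank_span_eq_card hvind, Fintype.card_coe]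
    rw [Set.ncard_eq_toFinset_card' B']
    rw [hs]
    congr 1
    ext q
    simp only [hfin.mem_toFinset, Set.mem_toFinset]

end AuxLemmas

theorem stmt6 {F : Type*} [Field F] {n : ℕ} (B : Set (Fin n × Fin n)) (k : ℕ) :
    sSup {d | ∃ W : Submodule F (Matrix (Fin n) (Fin n) F),
        (∀ A ∈ W, ∀ i j, (i, j) ∉ B → A i j = 0) ∧
        (∀ A ∈ W, A.rank ≤ k) ∧ Module.finrank F W = d}
      = sSup {m | ∃ B' : Set (Fin n × Fin n), B' ⊆ B ∧ nuB B' ≤ k ∧ B'.ncard = m} := by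
  classical
  have Lbdd : BddAbove {d | ∃ W : Submodule F (Matrix (Fin n) (Fin n) F),
      (∀ A ∈ W, ∀ i j, (i, j) ∉ B → A i j = 0) ∧
      (∀ A ∈ W, A.rank ≤ k) ∧ Module.finrank F W = d} := by
    refine ⟨Module.finrank F (Matrix (Fin n) (Fin n) F), ?_⟩
    rintro d ⟨W, _, _, rfl⟩
    exact Submodule.finrank_le W
  have Rbdd : BddAbove {m | ∃ B' : Set (Fin n × Fin n), B' ⊆ B ∧ nuB B' ≤ k ∧ B'.ncard = m} := by
    refine ⟨Fintype.card (Fin n × Fin n), ?_⟩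
    rintro m ⟨B', _, _, rfl⟩
    exact le_trans (Set.ncard_le_ncard (Set.subset_univ B') (Set.toFinite _))
      (by simp [Set.ncard_univ])
  apply le_antisymm
  · apply csSup_le
    · refine ⟨0, ⊥, ?_, ?_, ?_⟩
      · intro A hA i j _
        rw [Submodule.mem_bot] at hA
        rw [hA]
        rfl
      · intro A hA
        rw [Submodule.mem_bot] at hA
        rw [hA]
        simp [Matrix.rank_zero]
      · exact finrank_bot F _
    · rintro d ⟨W, hsupp, hrk, rfl⟩
      have hsub : BW W ⊆ B := by
        rintro ⟨i, j⟩ ⟨A, hAW, hA0, hij, hmin⟩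
        by_contra hb
        exact hij (hsupp A hAW i j hb)
      have hnu : nuB (BW W) ≤ k := by
        apply csSup_le
        · exact ⟨0, ∅, by simp, fun p hp => absurd hp (Finset.notMem_empty p),
            Finset.card_empty⟩
        · rintro mm ⟨B₀, hs, hmt, rfl⟩
          exact matching_card_le W hrk B₀ hs hmt
      exact le_trans (finrank_le_BW W) (le_csSup Rbdd ⟨BW W, hsub, hnu, rfl⟩)
  · apply csSup_le
    · refine ⟨0, ∅, Set.empty_subset B, ?_, by simp⟩
      apply csSup_le
      · exact ⟨0, ∅, by simp, fun p hp => absurd hp (Finset.notMem_empty p),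
          Finset.card_empty⟩
      · rintro mm ⟨B₀, hs, _, rfl⟩
        have hB0 : (↑B₀ : Set (Fin n × Fin n)) = ∅ := Set.subset_empty_iff.mp hs
        rw [Finset.coe_eq_empty] at hB0
        simp [hB0]
    · rintro m ⟨B', hB'B, hnu, rfl⟩
      obtain ⟨W, hWsupp, hWdim⟩ := exists_W (F := F) B'
      refine le_csSup Lbdd ⟨W, ?_, ?_, hWdim⟩
      · intro A hA i j hij
        exact hWsupp A hA i j (fun h => hij (hB'B h))
      · intro A hA
        exact le_trans (rank_le_nuB A B' (hWsupp A hA)) hnu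
end

section
/- Let F be a field with char F ≠ 2, let k ≥ 2, and let U ≤ M_{k+1}(F) be a linear subspace such that B(U) = [k] × [k+1] (the set of lexicographically minimal support positions of nonzero elements of U is exactly {(i,j) : 1 ≤ i ≤ k, 1 ≤ j ≤ k+1}) and the maximal permanental rank of elements of U is k. Then U = span{e_i : i ∈ [k]} ⊗ F^{k+1}, i.e., U consists of all matrices whose last row is zero. -/
open Matrix

-- auxiliary lemmas (to be appended before the theorem)

section AuxPerm

lemma perm_fix_two {X : Type*} [DecidableEq X] (τ : Equiv.Perm X) (a b : X)
    (h : ∀ i, i ≠ a → i ≠ b → τ i = i) : τ = 1 ∨ τ = Equiv.swap a b := by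
  have ha' : τ a = a ∨ τ a = b := by
    by_contra hcon
    push_neg at hcon
    have := h (τ a) hcon.1 hcon.2
    exact hcon.1 (τ.injective this)
  have hb' : τ b = a ∨ τ b = b := by
    by_contra hcon
    push_neg at hcon
    have := h (τ b) hcon.1 hcon.2
    exact hcon.2 (τ.injective this)
  rcases ha' with h1 | h1
  · left
    ext c
    simp only [Equiv.Perm.coe_one, id_eq]
    by_cases hc1 : c = a
    · subst hc1; exact h1
    by_cases hc2 : c = b
    · rw [hc2]
      rcases hb' with h2 | h2
      · have hba : b = a := τ.injective (h2.trans h1.symm)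
        rw [hba, h1]
      · exact h2
    · exact h c hc1 hc2
  · right
    ext c
    by_cases hc1 : c = a
    · subst hc1; rw [h1, Equiv.swap_apply_left]
    by_cases hc2 : c = b
    · rw [hc2]
      rcases hb' with h2 | h2
      · rw [h2, Equiv.swap_apply_right]
      · have hab : a = b := τ.injective (h1.trans h2.symm)
        rw [h2, ← hab, hab, Equiv.swap_apply_right]
    · rw [h c hc1 hc2, Equiv.swap_apply_of_ne_of_ne hc1 hc2]

lemma exists_perm_two {X : Type*} [DecidableEq X] {a b c d : X} (hab : a ≠ b) (hcd : c ≠ d) :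
    ∃ ρ : Equiv.Perm X, ρ a = c ∧ ρ b = d := by
  refine ⟨Equiv.swap (Equiv.swap a c b) d * Equiv.swap a c, ?_, ?_⟩
  · have h1 : Equiv.swap a c a = c := Equiv.swap_apply_left a c
    show Equiv.swap (Equiv.swap a c b) d (Equiv.swap a c a) = c
    rw [h1]
    apply Equiv.swap_apply_of_ne_of_ne
    · intro h
      exact hab ((Equiv.swap a c).injective (h.symm.trans h1.symm)).symm
    · exact hcd
  · show Equiv.swap (Equiv.swap a c b) d (Equiv.swap a c b) = d
    exact Equiv.swap_apply_left _ _

lemma per_special {F : Type*} [Field F] {k : ℕ} (a : Fin (k+1)) (ha : a ≠ Fin.last k)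
    (ρ : Equiv.Perm (Fin (k+1))) (t : F) (x w : Fin (k+1) → F) :
    per (fun i j => if i = a then x j else if i = Fin.last k then w j
          else if j = ρ i then t else 0)
      = t^(k-1) * (x (ρ a) * w (ρ (Fin.last k)) + x (ρ (Fin.last k)) * w (ρ a)) := by
  classical
  set la := Fin.last k with hla
  set B : Matrix (Fin (k+1)) (Fin (k+1)) F :=
    fun i j => if i = a then x j else if i = la then w j else if j = ρ i then t else 0 with hBdef
  have hmem : la ∈ Finset.univ.erase a := Finset.mem_erase.mpr ⟨Ne.symm ha, Finset.mem_univ _⟩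
  have hprod : ∀ σ : Equiv.Perm (Fin (k+1)), (∀ i, i ≠ a → i ≠ la → σ i = ρ i) →
      ∏ i, B i (σ i) = t^(k-1) * (x (σ a) * w (σ la)) := by
    intro σ hσ
    rw [← Finset.mul_prod_erase Finset.univ _ (Finset.mem_univ a),
        ← Finset.mul_prod_erase _ _ hmem]
    have h1 : B a (σ a) = x (σ a) := by simp [hBdef]
    have h2 : B la (σ la) = w (σ la) := by simp [hBdef, Ne.symm ha]
    have h3 : ∏ i ∈ (Finset.univ.erase a).erase la, B i (σ i) = t^(k-1) := by
      have hc : ∀ i ∈ (Finset.univ.erase a).erase la, B i (σ i) = t := by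
        intro i hi
        obtain ⟨hila, hia⟩ := Finset.mem_erase.mp hi
        obtain ⟨hia', -⟩ := Finset.mem_erase.mp hia
        simp [hBdef, hia', hila, hσ i hia' hila]
      rw [Finset.prod_congr rfl hc, Finset.prod_const]
      congr 1
      rw [Finset.card_erase_of_mem hmem, Finset.card_erase_of_mem (Finset.mem_univ a)]
      simp
    rw [h1, h2, h3]; ring
  have hne : ρ ≠ ρ * Equiv.swap a la := by
    intro h
    have : ρ a = ρ la := by
      conv_lhs => rw [h]
      simp [Equiv.Perm.mul_apply]
    exact ha (ρ.injective this)
  have hsum : per B = ∑ σ ∈ ({ρ, ρ * Equiv.swap a la} : Finset (Equiv.Perm (Fin (k+1)))),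
      ∏ i, B i (σ i) := by
    unfold per
    symm
    apply Finset.sum_subset (Finset.subset_univ _)
    intro σ _ hσ
    by_cases hag : ∀ i, i ≠ a → i ≠ la → σ i = ρ i
    · exfalso
      apply hσ
      have hfix : ∀ i, i ≠ a → i ≠ la → (ρ⁻¹ * σ) i = i := by
        intro i h1 h2
        simp [Equiv.Perm.mul_apply, hag i h1 h2]
      rcases perm_fix_two (ρ⁻¹ * σ) a la hfix with h | h
      · have hs : σ = ρ := by
          have := congrArg (fun τ => ρ * τ) h
          simpa [mul_assoc] using this
        simp [hs]
      · have hs : σ = ρ * Equiv.swap a la := by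
          have := congrArg (fun τ => ρ * τ) h
          simpa [mul_assoc] using this
        simp [hs]
    · push_neg at hag
      obtain ⟨i, hia, hila, hne'⟩ := hag
      apply Finset.prod_eq_zero (Finset.mem_univ i)
      simp [hBdef, hia, hila, hne']
  rw [hsum, Finset.sum_pair hne, hprod ρ (fun i _ _ => rfl),
      hprod _ (fun i h1 h2 => by simp [Equiv.Perm.mul_apply, Equiv.swap_apply_of_ne_of_ne h1 h2])]
  have e1 : (ρ * Equiv.swap a la) a = ρ la := by simp [Equiv.Perm.mul_apply]
  have e2 : (ρ * Equiv.swap a la) la = ρ a := by simp [Equiv.Perm.mul_apply]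
  rw [e1, e2]; ring

end AuxPerm

section AuxLex

def keyPos {n : ℕ} (q : Fin n × Fin n) : ℕ := (q.1 : ℕ) * n + (q.2 : ℕ)

lemma keyPos_lt_of_lexLt {n : ℕ} {q p : Fin n × Fin n} (h : LexLt q p) :
    keyPos q < keyPos p := by
  rcases h with h | ⟨h1, h2⟩
  · have hq2 : (q.2 : ℕ) < n := q.2.isLt
    have h2 : (q.1 : ℕ) + 1 ≤ (p.1 : ℕ) := h
    have h3 : ((q.1 : ℕ) + 1) * n ≤ (p.1 : ℕ) * n := Nat.mul_le_mul_right n h2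
    have h4 : (q.1 : ℕ) * n + n ≤ (p.1 : ℕ) * n := by
      rw [← Nat.succ_mul]; exact h3
    unfold keyPos
    have := Nat.le_add_right ((p.1 : ℕ) * n) (p.2 : ℕ)
    omega
  · unfold keyPos
    rw [show ((q.1 : ℕ)) = (p.1 : ℕ) from congrArg Fin.val h1]
    have h2' : (q.2 : ℕ) < (p.2 : ℕ) := h2
    omega

lemma lexLt_of_keyPos_lt {n : ℕ} {q p : Fin n × Fin n} (h : keyPos q < keyPos p) :
    LexLt q p := by
  by_contra hcon
  rcases lt_trichotomy q.1 p.1 with h1 | h1 | h1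
  · exact hcon (Or.inl h1)
  · rcases lt_trichotomy q.2 p.2 with h2 | h2 | h2
    · exact hcon (Or.inr ⟨h1, h2⟩)
    · have : q = p := Prod.ext h1 h2
      rw [this] at h; exact lt_irrefl _ h
    · have := keyPos_lt_of_lexLt (n := n) (Or.inr ⟨h1.symm, h2⟩ : LexLt p q)
      omega
  · have := keyPos_lt_of_lexLt (n := n) (Or.inl h1 : LexLt p q)
    omega

lemma keyPos_inj {n : ℕ} {q p : Fin n × Fin n} (h : keyPos q = keyPos p) : q = p := by
  rcases lt_trichotomy q.1 p.1 with h1 | h1 | h1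
  · have := keyPos_lt_of_lexLt (n := n) (Or.inl h1 : LexLt q p); omega
  · rcases lt_trichotomy q.2 p.2 with h2 | h2 | h2
    · have := keyPos_lt_of_lexLt (n := n) (Or.inr ⟨h1, h2⟩ : LexLt q p); omega
    · exact Prod.ext h1 h2
    · have := keyPos_lt_of_lexLt (n := n) (Or.inr ⟨h1.symm, h2⟩ : LexLt p q); omega
  · have := keyPos_lt_of_lexLt (n := n) (Or.inl h1 : LexLt p q); omega

lemma keyPos_lt_bound {n : ℕ} (q : Fin (n+1) × Fin (n+1)) : keyPos q < (n+1) * (n+1) := by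
  unfold keyPos
  have h1 : (q.1 : ℕ) ≤ n := Nat.lt_succ_iff.mp q.1.isLt
  have h2 : (q.2 : ℕ) ≤ n := Nat.lt_succ_iff.mp q.2.isLt
  have h3 : (q.1 : ℕ) * (n+1) ≤ n * (n+1) := Nat.mul_le_mul_right _ h1
  have h4 : (n+1) * (n+1) = n * (n+1) + (n+1) := by ring
  omega

lemma keyPos_decode {n : ℕ} {N : ℕ} (hN : N < (n+1) * (n+1)) :
    ∃ q : Fin (n+1) × Fin (n+1), keyPos q = N := by
  have hpos : 0 < n + 1 := Nat.succ_pos n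
  refine ⟨(⟨N / (n+1), ?_⟩, ⟨N % (n+1), Nat.mod_lt _ hpos⟩), ?_⟩
  · exact Nat.div_lt_iff_lt_mul hpos |>.mpr hN
  · show N / (n+1) * (n+1) + N % (n+1) = N
    rw [Nat.mul_comm]
    exact Nat.div_add_mod N (n+1)

lemma exists_lead {F : Type*} [Field F] {n : ℕ} (A : Matrix (Fin n) (Fin n) F) (hA : A ≠ 0) :
    ∃ p : Fin n × Fin n, A p.1 p.2 ≠ 0 ∧ ∀ q, LexLt q p → A q.1 q.2 = 0 := by
  classical
  have hS : (Finset.univ.filter (fun p : Fin n × Fin n => A p.1 p.2 ≠ 0)).Nonempty := by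
    by_contra h
    rw [Finset.not_nonempty_iff_eq_empty, Finset.filter_eq_empty_iff] at h
    apply hA
    ext i j
    have := h (Finset.mem_univ (i, j))
    simpa using this
  obtain ⟨p, hp, hmin⟩ := Finset.exists_min_image _ keyPos hS
  refine ⟨p, (Finset.mem_filter.mp hp).2, ?_⟩
  intro q hq
  by_contra hq0
  have hqS : q ∈ Finset.univ.filter (fun p : Fin n × Fin n => A p.1 p.2 ≠ 0) := by
    simp [hq0]
  have := hmin q hqS
  have := keyPos_lt_of_lexLt hq
  omega

end AuxLex

def xhat {F : Type*} [Field F] {n : ℕ} (a : Fin n) (x : Fin n → F) :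
    Matrix (Fin n) (Fin n) F := fun i j => if i = a then x j else 0

def ebas {F : Type*} [Field F] {n : ℕ} (b : Fin n) : Fin n → F :=
  fun j => if j = b then 1 else 0


theorem stmt7 {F : Type*} [Field F] (hc : ringChar F ≠ 2) {k : ℕ} (hk : 2 ≤ k)
    (U : Submodule F (Matrix (Fin (k + 1)) (Fin (k + 1)) F))
    (hB : BW U = {p : Fin (k + 1) × Fin (k + 1) | (p.1 : ℕ) < k})
    (hub : ∀ A ∈ U, prk A ≤ k) (hex : ∃ A ∈ U, prk A = k) :
    (U : Set (Matrix (Fin (k + 1)) (Fin (k + 1)) F))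
      = {A | ∀ j, A (Fin.last k) j = 0} := by
  classical
  have h2F : (2 : F) ≠ 0 := Ring.two_ne_zero hc
  have hlast_ne : ∀ i : Fin (k+1), i ≠ Fin.last k ↔ (i : ℕ) < k := by
    intro i
    constructor
    · intro h
      have h1 : (i : ℕ) < k + 1 := i.isLt
      have h2 : (i : ℕ) ≠ k := by
        intro hh
        exact h (Fin.ext (hh.trans (Fin.val_last k).symm))
      omega
    · intro h hcon
      rw [hcon, Fin.val_last] at h
      omega
  have hBmem : ∀ p : Fin (k+1) × Fin (k+1), (p.1 : ℕ) < k →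
      ∃ A ∈ U, A ≠ 0 ∧ A p.1 p.2 ≠ 0 ∧ ∀ q, LexLt q p → A q.1 q.2 = 0 := by
    intro p hp
    have : p ∈ BW U := by rw [hB]; exact hp
    exact this
  have perU : ∀ A ∈ U, per A = 0 := by
    intro A hA
    by_contra hper
    have hk1 : k + 1 ∈ {m | ∃ I J : Fin m → Fin (k+1), StrictMono I ∧ StrictMono J ∧
        per (A.submatrix I J) ≠ 0} := ⟨id, id, strictMono_id, strictMono_id, by simpa using hper⟩
    have hbdd : BddAbove {m | ∃ I J : Fin m → Fin (k+1), StrictMono I ∧ StrictMono J ∧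
        per (A.submatrix I J) ≠ 0} := by
      refine ⟨k+1, fun m hm => ?_⟩
      obtain ⟨I, J, hI, hJ, -⟩ := hm
      simpa using Fintype.card_le_of_injective I hI.injective
    have hge := le_csSup hbdd hk1
    have hle := hub A hA
    unfold prk at hle
    omega
  have inj0 : ∀ A ∈ U, (∀ i j, i ≠ Fin.last k → A i j = 0) → A = 0 := by
    intro A hAU h
    by_contra hA
    obtain ⟨p, hp1, hp2⟩ := exists_lead A hA
    have hpB : p ∈ BW U := ⟨A, hAU, hA, hp1, hp2⟩
    rw [hB] at hpB
    exact hp1 (h _ _ ((hlast_ne p.1).mpr hpB))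
  have surj : ∀ T : Matrix (Fin (k+1)) (Fin (k+1)) F, (∀ j, T (Fin.last k) j = 0) →
      ∃ A ∈ U, ∀ i j, i ≠ Fin.last k → A i j = T i j := by
    have main : ∀ M : ℕ, ∀ T : Matrix (Fin (k+1)) (Fin (k+1)) F,
        (∀ j, T (Fin.last k) j = 0) →
        (∀ q : Fin (k+1) × Fin (k+1), keyPos q < (k+1)*(k+1) - M → T q.1 q.2 = 0) →
        ∃ A ∈ U, ∀ i j, i ≠ Fin.last k → A i j = T i j := by
      intro M
      induction M with
      | zero =>
        intro T hT0 hvan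
        refine ⟨0, U.zero_mem, ?_⟩
        intro i j hi
        have := hvan (i, j) (by have := keyPos_lt_bound (n := k) (i, j); omega)
        simpa using this.symm
      | succ M ih =>
        intro T hT0 hvan
        by_cases hM : (k+1)*(k+1) ≤ M
        · exact ih T hT0 (fun q hq => absurd hq (by omega))
        · have hb : (k+1)*(k+1) - (M+1) < (k+1)*(k+1) := by omega
          obtain ⟨qN, hqN⟩ := keyPos_decode hb
          by_cases hTq : T qN.1 qN.2 = 0
          · apply ih T hT0
            intro q hq
            rcases Nat.lt_or_ge (keyPos q) ((k+1)*(k+1) - (M+1)) with h | h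
            · exact hvan q h
            · have hqe : q = qN := keyPos_inj (show keyPos q = keyPos qN by omega)
              rw [hqe]; exact hTq
          · have hq1 : qN.1 ≠ Fin.last k := by
              intro h
              apply hTq
              have := hT0 qN.2
              rw [← h] at this
              exact this
            obtain ⟨A₀, hA₀U, hA₀ne, hA₀v, hA₀lead⟩ := hBmem qN ((hlast_ne _).mp hq1)
            set c := T qN.1 qN.2 / A₀ qN.1 qN.2 with hc
            set T' : Matrix (Fin (k+1)) (Fin (k+1)) F :=
              fun i j => T i j - c * (if i = Fin.last k then 0 else A₀ i j) with hT'
            have hT'0 : ∀ j, T' (Fin.last k) j = 0 := by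
              intro j; simp [hT', hT0 j]
            have hT'van : ∀ q : Fin (k+1) × Fin (k+1),
                keyPos q < (k+1)*(k+1) - M → T' q.1 q.2 = 0 := by
              intro q hq
              rcases Nat.lt_or_ge (keyPos q) ((k+1)*(k+1) - (M+1)) with h | h
              · have h1 : T q.1 q.2 = 0 := hvan q h
                by_cases hql : q.1 = Fin.last k
                · simp [hT', hql, h1, hT0]
                · have h2 : A₀ q.1 q.2 = 0 := hA₀lead q (lexLt_of_keyPos_lt (by omega))
                  simp [hT', hql, h1, h2]
              · have hqe : q = qN := keyPos_inj (show keyPos q = keyPos qN by omega)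
                rw [hqe]
                have hTT : T' qN.1 qN.2 = T qN.1 qN.2 - c * A₀ qN.1 qN.2 := by
                  simp [hT', hq1]
                rw [hTT, hc, div_mul_cancel₀ _ hA₀v, sub_self]
            obtain ⟨A', hA'U, hA'top⟩ := ih T' hT'0 hT'van
            refine ⟨A' + c • A₀, U.add_mem hA'U (U.smul_mem c hA₀U), ?_⟩
            intro i j hi
            have h1 := hA'top i j hi
            simp only [Matrix.add_apply, Matrix.smul_apply, smul_eq_mul, h1, hT', if_neg hi]
            ring
    intro T hT0
    apply main ((k+1)*(k+1)) T hT0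
    intro q hq
    exact absurd hq (by omega)
  -- choose preimages
  have hsk : ∀ T : Matrix (Fin (k+1)) (Fin (k+1)) F, ∃ A,
      ((∀ j, T (Fin.last k) j = 0) → A ∈ U ∧ ∀ i j, i ≠ Fin.last k → A i j = T i j) := by
    intro T
    by_cases h : ∀ j, T (Fin.last k) j = 0
    · obtain ⟨A, h1, h2⟩ := surj T h
      exact ⟨A, fun _ => ⟨h1, h2⟩⟩
    · exact ⟨0, fun h' => absurd h' h⟩
  choose g hg using hsk
  have gU : ∀ T, (∀ j, T (Fin.last k) j = 0) → g T ∈ U := fun T h => (hg T h).1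
  have gtop : ∀ T, (∀ j, T (Fin.last k) j = 0) → ∀ i j, i ≠ Fin.last k → g T i j = T i j :=
    fun T h => (hg T h).2
  have uniq : ∀ A ∈ U, ∀ A' ∈ U, (∀ i j, i ≠ Fin.last k → A i j = A' i j) → A = A' := by
    intro A hA A' hA' h
    have hz : A - A' = 0 := by
      apply inj0 _ (U.sub_mem hA hA')
      intro i j hi
      simp [Matrix.sub_apply, h i j hi]
    exact sub_eq_zero.mp hz
  have gadd : ∀ T T', (∀ j, T (Fin.last k) j = 0) → (∀ j, T' (Fin.last k) j = 0) →
      g (T + T') = g T + g T' := by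
    intro T T' h h'
    have hs : ∀ j, (T + T') (Fin.last k) j = 0 := by
      intro j; simp [Matrix.add_apply, h j, h' j]
    apply uniq _ (gU _ hs) _ (U.add_mem (gU T h) (gU T' h'))
    intro i j hi
    rw [gtop _ hs i j hi, Matrix.add_apply, Matrix.add_apply, gtop T h i j hi,
      gtop T' h' i j hi]
  have gneg : ∀ T, (∀ j, T (Fin.last k) j = 0) → g (-T) = - g T := by
    intro T h
    have hs : ∀ j, (-T) (Fin.last k) j = 0 := by
      intro j; simp [Matrix.neg_apply, h j]
    apply uniq _ (gU _ hs) _ (U.neg_mem (gU T h))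
    intro i j hi
    rw [gtop _ hs i j hi, Matrix.neg_apply, Matrix.neg_apply, gtop T h i j hi]
  have hx0 : ∀ (a : Fin (k+1)), a ≠ Fin.last k → ∀ (x : Fin (k+1) → F),
      ∀ j, (xhat a x) (Fin.last k) j = 0 := by
    intro a ha x j
    simp [xhat, Ne.symm ha]
  -- the key relation
  have key : ∀ a : Fin (k+1), a ≠ Fin.last k → ∀ (ρ : Equiv.Perm (Fin (k+1)))
      (x : Fin (k+1) → F),
      x (ρ a) * g (xhat a x) (Fin.last k) (ρ (Fin.last k))
        + x (ρ (Fin.last k)) * g (xhat a x) (Fin.last k) (ρ a) = 0 := by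
    intro a ha ρ x
    set D : Matrix (Fin (k+1)) (Fin (k+1)) F :=
      fun i j => if i = a then 0 else if i = Fin.last k then 0
        else if j = ρ i then 1 else 0 with hD
    have hD0 : ∀ j, D (Fin.last k) j = 0 := by
      intro j; simp [hD, Ne.symm ha]
    have hxh0 := hx0 a ha x
    have hDa : ∀ j, D a j = 0 := by intro j; simp [hD]
    have hDo : ∀ i j, i ≠ a → i ≠ Fin.last k → D i j = (if j = ρ i then (1:F) else 0) := by
      intro i j h1 h2; simp [hD, h1, h2]
    -- first identity
    have hadd0 : ∀ j, (D + xhat a x) (Fin.last k) j = 0 := by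
      intro j; simp [Matrix.add_apply, hD0 j, hxh0 j]
    set w₁ : Fin (k+1) → F :=
      fun j => g D (Fin.last k) j + g (xhat a x) (Fin.last k) j with hw₁
    have h1 : g (D + xhat a x) = fun i j => if i = a then x j
        else if i = Fin.last k then w₁ j else if j = ρ i then (1:F) else 0 := by
      funext i j
      by_cases hia : i = a
      · rw [gtop _ hadd0 i j (by rw [hia]; exact ha)]
        simp [Matrix.add_apply, hia, hDa j, xhat]
      · by_cases hila : i = Fin.last k
        · rw [hila, gadd D _ hD0 hxh0, Matrix.add_apply]
          simp [hw₁, Ne.symm ha]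
        · rw [gtop _ hadd0 i j hila]
          simp [Matrix.add_apply, hia, hila, hDo i j hia hila, xhat]
    have e1 := per_special a ha ρ (1:F) x w₁
    rw [← h1] at e1
    rw [perU _ (gU _ hadd0), one_pow] at e1
    -- second identity
    have hnD0 : ∀ j, (-D) (Fin.last k) j = 0 := by
      intro j; simp [Matrix.neg_apply, hD0 j]
    have hadd0' : ∀ j, (xhat a x + -D) (Fin.last k) j = 0 := by
      intro j; simp [Matrix.add_apply, hnD0 j, hxh0 j]
    set w₂ : Fin (k+1) → F :=
      fun j => g (xhat a x) (Fin.last k) j - g D (Fin.last k) j with hw₂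
    have h2 : g (xhat a x + -D) = fun i j => if i = a then x j
        else if i = Fin.last k then w₂ j else if j = ρ i then (-1:F) else 0 := by
      funext i j
      by_cases hia : i = a
      · rw [gtop _ hadd0' i j (by rw [hia]; exact ha)]
        simp [Matrix.add_apply, Matrix.neg_apply, hia, hDa j, xhat]
      · by_cases hila : i = Fin.last k
        · rw [hila, gadd _ _ hxh0 hnD0, Matrix.add_apply, gneg D hD0, Matrix.neg_apply]
          simp [hw₂, Ne.symm ha, sub_eq_add_neg]
        · rw [gtop _ hadd0' i j hila]
          simp only [Matrix.add_apply, Matrix.neg_apply, xhat, if_neg hia, if_neg hila,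
            hDo i j hia hila]
          by_cases hj : j = ρ i <;> simp [hj]
    have e2 := per_special a ha ρ (-1:F) x w₂
    rw [← h2] at e2
    rw [perU _ (gU _ hadd0')] at e2
    have e2' : x (ρ a) * w₂ (ρ (Fin.last k)) + x (ρ (Fin.last k)) * w₂ (ρ a) = 0 := by
      rcases mul_eq_zero.mp e2.symm with h | h
      · exact absurd h (pow_ne_zero _ (neg_ne_zero.mpr one_ne_zero))
      · exact h
    have e1' : x (ρ a) * w₁ (ρ (Fin.last k)) + x (ρ (Fin.last k)) * w₁ (ρ a) = 0 := by
      linear_combination -e1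
    rw [hw₁] at e1'
    rw [hw₂] at e2'
    simp only [] at e1' e2'
    have h2goal : 2 * (x (ρ a) * g (xhat a x) (Fin.last k) (ρ (Fin.last k))
        + x (ρ (Fin.last k)) * g (xhat a x) (Fin.last k) (ρ a)) = 0 := by
      linear_combination e1' + e2'
    rcases mul_eq_zero.mp h2goal with h | h
    · exact absurd h h2F
    · exact h
  -- entries of the last row of basis preimages vanish
  have offdiag : ∀ a : Fin (k+1), a ≠ Fin.last k → ∀ b l : Fin (k+1), b ≠ l →
      g (xhat a (ebas b)) (Fin.last k) l = 0 := by
    intro a ha b l hbl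
    obtain ⟨ρ, hρ1, hρ2⟩ := exists_perm_two ha hbl
    have hkey := key a ha ρ (ebas b)
    rw [hρ1, hρ2] at hkey
    have hb1 : ebas (F := F) b b = 1 := by simp [ebas]
    have hl0 : ebas (F := F) b l = 0 := by simp [ebas, Ne.symm hbl]
    rw [hb1, hl0] at hkey
    linear_combination hkey
  have diagpair : ∀ a : Fin (k+1), a ≠ Fin.last k → ∀ b m : Fin (k+1), b ≠ m →
      g (xhat a (ebas b)) (Fin.last k) b + g (xhat a (ebas m)) (Fin.last k) m = 0 := by
    intro a ha b m hbm
    obtain ⟨ρ, hρ1, hρ2⟩ := exists_perm_two ha hbm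
    have hx : xhat a (fun j => ebas (F := F) b j + ebas m j)
        = xhat a (ebas b) + xhat a (ebas m) := by
      funext i j
      by_cases hia : i = a <;> simp [xhat, hia, Matrix.add_apply]
    have hkey := key a ha ρ (fun j => ebas (F := F) b j + ebas m j)
    rw [hρ1, hρ2, hx, gadd _ _ (hx0 a ha _) (hx0 a ha _)] at hkey
    simp only [Matrix.add_apply] at hkey
    have hb1 : ebas (F := F) b b = 1 := by simp [ebas]
    have hm1 : ebas (F := F) m m = 1 := by simp [ebas]
    have hbm0 : ebas (F := F) b m = 0 := by simp [ebas, Ne.symm hbm]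
    have hmb0 : ebas (F := F) m b = 0 := by simp [ebas, hbm]
    rw [hb1, hm1, hbm0, hmb0] at hkey
    have o1 := offdiag a ha b m hbm
    have o2 := offdiag a ha m b (Ne.symm hbm)
    linear_combination hkey - o1 - o2
  have entry : ∀ a : Fin (k+1), a ≠ Fin.last k → ∀ b l : Fin (k+1),
      g (xhat a (ebas b)) (Fin.last k) l = 0 := by
    intro a ha b l
    by_cases hbl : b = l
    · subst hbl
      have hcard : 1 < (Finset.univ.erase b : Finset (Fin (k+1))).card := by
        rw [Finset.card_erase_of_mem (Finset.mem_univ b)]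
        simp only [Finset.card_univ, Fintype.card_fin]
        omega
      obtain ⟨m, hm, n, hn, hmn⟩ := Finset.one_lt_card.mp hcard
      have hmb : m ≠ b := (Finset.mem_erase.mp hm).1
      have hnb : n ≠ b := (Finset.mem_erase.mp hn).1
      have e1 := diagpair a ha b m (Ne.symm hmb)
      have e2 := diagpair a ha b n (Ne.symm hnb)
      have e3 := diagpair a ha m n hmn
      have h2goal : 2 * g (xhat a (ebas b)) (Fin.last k) b = 0 := by
        linear_combination e1 + e2 - e3
      rcases mul_eq_zero.mp h2goal with h | h
      · exact absurd h h2F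
      · exact h
    · exact offdiag a ha b l hbl
  have stdin : ∀ a : Fin (k+1), a ≠ Fin.last k → ∀ b : Fin (k+1),
      xhat a (ebas (F := F) b) ∈ U := by
    intro a ha b
    have hgx : g (xhat a (ebas (F := F) b)) = xhat a (ebas b) := by
      funext i j
      by_cases hila : i = Fin.last k
      · rw [hila, entry a ha b j]
        simp [xhat, Ne.symm ha]
      · exact gtop _ (hx0 a ha _) i j hila
    rw [← hgx]
    exact gU _ (hx0 a ha _)
  have Tin : ∀ T : Matrix (Fin (k+1)) (Fin (k+1)) F, (∀ j, T (Fin.last k) j = 0) → T ∈ U := by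
    intro T hT0
    have hrep : T = ∑ p : Fin (k+1) × Fin (k+1), T p.1 p.2 • xhat p.1 (ebas p.2) := by
      funext i j
      rw [Matrix.sum_apply]
      rw [Finset.sum_eq_single (i, j)]
      · simp [xhat, ebas]
      · intro p _ hp
        simp only [Matrix.smul_apply, smul_eq_mul, xhat, ebas]
        by_cases h1 : i = p.1
        · by_cases h2 : j = p.2
          · exact absurd (Prod.ext h1.symm h2.symm) (by simpa using hp.symm ∘ Eq.symm)
          · simp [h1, h2]
        · simp [h1]
      · intro h
        exact absurd (Finset.mem_univ _) h
    rw [hrep]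
    apply Submodule.sum_mem
    intro p _
    by_cases hp1 : p.1 = Fin.last k
    · have : T p.1 p.2 = 0 := by rw [hp1]; exact hT0 _
      rw [this, zero_smul]
      exact U.zero_mem
    · exact U.smul_mem _ (stdin p.1 hp1 p.2)
  ext A
  simp only [SetLike.mem_coe, Set.mem_setOf_eq]
  constructor
  · intro hA j
    set T : Matrix (Fin (k+1)) (Fin (k+1)) F :=
      fun i j => if i = Fin.last k then 0 else A i j with hT
    have hT0 : ∀ j, T (Fin.last k) j = 0 := by intro j; simp [hT]
    have hTU : T ∈ U := Tin T hT0
    have hAT : A = T := by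
      apply uniq A hA T hTU
      intro i j hi
      simp [hT, hi]
    rw [hAT]
    simp [hT]
  · intro hA
    exact Tin A hA
end

section
/- Let F be a field and G ⊆ {{i,j} : 1 ≤ i < j ≤ n} a graph on [n]. The maximal rank of a matrix in the space A_G(F) of alternating matrices supported on G equals 2ν(G), twice the matching number of G. -/
open Matrix

open Equiv Finset Submodule

set_option maxHeartbeats 2000000

theorem Equiv.Perm.apply_inv_self {α : Type*} (f : Perm α) (x : α) : f (f⁻¹ x) = x :=
  f.apply_symm_apply x

theorem Equiv.Perm.inv_apply_self {α : Type*} (f : Perm α) (x : α) : f⁻¹ (f x) = x :=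
  f.symm_apply_apply x

lemma parity_involution {k : ℕ} (σ : Equiv.Perm (Fin k))
    (hfp : ∀ x, σ x ≠ x)
    (heven : ∀ x, Even ((σ.cycleOf x).support.card)) :
    ∃ π : Fin k → Fin k, (∀ x, π (π x) = x) ∧ (∀ x, π x ≠ x) ∧
      (∀ x, π x = σ x ∨ σ (π x) = x) := by
  classical
  obtain ⟨p, hp01, hflip⟩ : ∃ p : Fin k → ℕ, (∀ x, p x = 0 ∨ p x = 1) ∧
      (∀ x, p (σ x) = (p x + 1) % 2) := by
    have hxmem : ∀ x, x ∈ (σ.cycleOf x).support := fun x =>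
      Equiv.Perm.mem_support_cycleOf_iff.2 ⟨Equiv.Perm.SameCycle.refl _ _,
        Equiv.Perm.mem_support.2 (hfp x)⟩
    have hne : ∀ x, ((σ.cycleOf x).support).Nonempty := fun x => ⟨x, hxmem x⟩
    have hmin : ∀ (s t : Finset (Fin k)) (hs : s.Nonempty) (ht : t.Nonempty), s = t →
        s.min' hs = t.min' ht := by rintro s t hs ht rfl; rfl
    have hrx : ∀ x, ∃ j : ℕ, (σ ^ j) (((σ.cycleOf x).support).min' (hne x)) = x := by
      intro x
      obtain ⟨j, _, hj⟩ := (σ.isCycleOn_support_cycleOf x).exists_pow_eq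
        (Finset.min'_mem _ _) (hxmem x)
      exact ⟨j, hj⟩
    have hSapp : ∀ x, σ.cycleOf (σ x) = σ.cycleOf x := fun x =>
      (Equiv.Perm.SameCycle.cycleOf_eq (Equiv.Perm.sameCycle_apply_right.2
        (Equiv.Perm.SameCycle.refl _ _))).symm
    refine ⟨fun x => (Nat.find (hrx x)) % 2, fun x => Nat.mod_two_eq_zero_or_one _, ?_⟩
    intro x
    have hr' : ((σ.cycleOf (σ x)).support).min' (hne (σ x))
        = ((σ.cycleOf x).support).min' (hne x) := hmin _ _ _ _ (by rw [hSapp x])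
    have h1 : (σ ^ (Nat.find (hrx x) + 1)) (((σ.cycleOf x).support).min' (hne x)) = σ x := by
      rw [pow_succ']
      simp [Nat.find_spec (hrx x)]
    have h2 : (σ ^ (Nat.find (hrx (σ x)))) (((σ.cycleOf x).support).min' (hne x)) = σ x := by
      rw [← hr']; exact Nat.find_spec (hrx (σ x))
    have hmod : Nat.find (hrx (σ x)) ≡ Nat.find (hrx x) + 1 [MOD (σ.cycleOf x).support.card] := by
      exact ((σ.isCycleOn_support_cycleOf x).pow_apply_eq_pow_apply
        (Finset.min'_mem _ _)).1 (h2.trans h1.symm)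
    have hm2 : Nat.find (hrx (σ x)) ≡ Nat.find (hrx x) + 1 [MOD 2] := hmod.of_dvd (heven x).two_dvd
    show Nat.find (hrx (σ x)) % 2 = (Nat.find (hrx x) % 2 + 1) % 2
    simp only [Nat.ModEq] at hm2
    omega
  refine ⟨fun x => if p x = 0 then σ x else σ⁻¹ x, ?_, ?_, ?_⟩
  · intro x
    by_cases h : p x = 0
    · have h1 : p (σ x) = 1 := by rw [hflip x, h]
      simp [h, h1]
    · have h1 : p x = 1 := (hp01 x).resolve_left h
      have h0 : p (σ⁻¹ x) = 0 := by
        rcases hp01 (σ⁻¹ x) with h' | h'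
        · exact h'
        · exfalso
          have := hflip (σ⁻¹ x)
          rw [Equiv.Perm.apply_inv_self, h', h1] at this
          simp at this
      simp only [h, h0, if_false, if_true, Equiv.Perm.apply_inv_self]
  · intro x
    by_cases h : p x = 0
    · simpa [h] using hfp x
    · simp only [h, if_false]
      intro hc
      exact hfp x (by conv_lhs => rw [← hc, Equiv.Perm.apply_inv_self])
  · intro x
    by_cases h : p x = 0
    · left; simp [h]
    · right; simp [h]

lemma reversal_spec {k : ℕ} (σ : Equiv.Perm (Fin k)) (i₀ : Fin k) (h : σ i₀ ≠ i₀) :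
    (∀ x ∈ (σ.cycleOf i₀).support, (σ * (σ.cycleOf i₀)⁻¹ * (σ.cycleOf i₀)⁻¹) x
        = (σ.cycleOf i₀)⁻¹ x) ∧
    (∀ x ∉ (σ.cycleOf i₀).support, (σ * (σ.cycleOf i₀)⁻¹ * (σ.cycleOf i₀)⁻¹) x = σ x) ∧
    (∀ x, (((σ * (σ.cycleOf i₀)⁻¹ * (σ.cycleOf i₀)⁻¹).cycleOf x).support.card
        = ((σ.cycleOf x).support.card))) ∧
    ((σ * (σ.cycleOf i₀)⁻¹ * (σ.cycleOf i₀)⁻¹).cycleOf i₀ = (σ.cycleOf i₀)⁻¹) := by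
  classical
  set c := σ.cycleOf i₀ with hc
  have hci : c.IsCycle := Equiv.Perm.isCycle_cycleOf σ h
  have hmemiff : ∀ x, x ∈ c.support ↔ σ.SameCycle i₀ x := by
    intro x
    rw [hc, Equiv.Perm.mem_support_cycleOf_iff]
    exact ⟨fun ⟨h1, _⟩ => h1, fun h1 => ⟨h1, Equiv.Perm.mem_support.2 h⟩⟩
  have hc_apply : ∀ x ∈ c.support, c x = σ x := by
    intro x hx
    exact Equiv.Perm.SameCycle.cycleOf_apply ((hmemiff x).1 hx)
  have hc_fix : ∀ x ∉ c.support, c x = x := fun x hx => Equiv.Perm.notMem_support.1 hx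
  have hcinv_mem : ∀ x, x ∈ c.support → c⁻¹ x ∈ c.support := by
    intro x hx
    rw [← Equiv.Perm.support_inv c] at hx ⊢
    exact Equiv.Perm.apply_mem_support.2 hx
  have hcinv_fix : ∀ x ∉ c.support, c⁻¹ x = x := by
    intro x hx
    have := hc_fix x hx
    exact (Equiv.injective c).eq_iff.1 (by rw [Equiv.Perm.apply_inv_self, this])
  have hsig : ∀ x, σ x ∈ c.support ↔ x ∈ c.support := by
    intro x
    rw [hmemiff, hmemiff]
    exact Equiv.Perm.sameCycle_apply_right
  -- pointwise values
  have h1 : ∀ x ∈ c.support, (σ * c⁻¹ * c⁻¹) x = c⁻¹ x := by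
    intro x hx
    have hx1 : c⁻¹ x ∈ c.support := hcinv_mem x hx
    have hx2 : c⁻¹ (c⁻¹ x) ∈ c.support := hcinv_mem _ hx1
    show σ (c⁻¹ (c⁻¹ x)) = c⁻¹ x
    rw [← hc_apply _ hx2, Equiv.Perm.apply_inv_self]
  have h2 : ∀ x ∉ c.support, (σ * c⁻¹ * c⁻¹) x = σ x := by
    intro x hx
    show σ (c⁻¹ (c⁻¹ x)) = σ x
    rw [hcinv_fix x hx, hcinv_fix x hx]
  -- disjoint factorization
  set d := c⁻¹ * σ with hd
  have hd_fix : ∀ x ∈ c.support, d x = x := by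
    intro x hx
    show c⁻¹ (σ x) = x
    rw [← hc_apply x hx, Equiv.Perm.inv_apply_self]
  have hd_eq : ∀ x ∉ c.support, d x = σ x := by
    intro x hx
    show c⁻¹ (σ x) = σ x
    exact hcinv_fix _ (fun hc' => hx ((hsig x).1 hc'))
  have hdisj : c.Disjoint d := by
    intro x
    by_cases hx : x ∈ c.support
    · exact Or.inr (hd_fix x hx)
    · exact Or.inl (hc_fix x hx)
  have hdisj' : c⁻¹.Disjoint d := by
    intro x
    rcases hdisj x with h' | h'
    · left
      exact (Equiv.injective c).eq_iff.1 (by rw [Equiv.Perm.apply_inv_self, h'])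
    · exact Or.inr h'
  have hcd : σ = c * d := by
    apply Equiv.ext; intro x
    by_cases hx : x ∈ c.support
    · show σ x = c (d x)
      rw [hd_fix x hx, hc_apply x hx]
    · show σ x = c (d x)
      rw [hd_eq x hx, hc_fix _ (fun hc' => hx ((hsig x).1 hc'))]
  have hrev : σ * c⁻¹ * c⁻¹ = c⁻¹ * d := by
    apply Equiv.ext; intro x
    by_cases hx : x ∈ c.support
    · rw [h1 x hx]
      show c⁻¹ x = c⁻¹ (d x)
      rw [hd_fix x hx]
    · rw [h2 x hx]
      show σ x = c⁻¹ (d x)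
      rw [hd_eq x hx, hcinv_fix _ (fun hc' => hx ((hsig x).1 hc'))]
  have hcycinv : ∀ x ∈ c.support, (σ * c⁻¹ * c⁻¹).cycleOf x = c⁻¹ := by
    intro x hx
    rw [hrev, hdisj'.cycleOf_mul_distrib x]
    have hx' : c⁻¹ x ≠ x := by
      have : x ∈ c⁻¹.support := by rw [Equiv.Perm.support_inv]; exact hx
      exact Equiv.Perm.mem_support.1 this
    rw [Equiv.Perm.IsCycle.cycleOf_eq hci.inv hx',
      (Equiv.Perm.cycleOf_eq_one_iff d).2 (hd_fix x hx), mul_one]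
  refine ⟨h1, h2, ?_, ?_⟩
  · intro x
    by_cases hx : x ∈ c.support
    · have hcx : σ.cycleOf x = c := ((hmemiff x).1 hx).cycleOf_eq.symm
      rw [hcycinv x hx, Equiv.Perm.support_inv, hcx]
    · have hl : (σ * c⁻¹ * c⁻¹).cycleOf x = d.cycleOf x := by
        rw [hrev, hdisj'.cycleOf_mul_distrib x,
          (Equiv.Perm.cycleOf_eq_one_iff c⁻¹).2 (hcinv_fix x hx), one_mul]
      have hr : σ.cycleOf x = d.cycleOf x := by
        have h1c : c.cycleOf x = 1 := (Equiv.Perm.cycleOf_eq_one_iff c).2 (hc_fix x hx)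
        rw [hcd, hdisj.cycleOf_mul_distrib x, h1c, one_mul]
      rw [hl, hr]
  · exact hcycinv i₀ (by rw [hmemiff])

section Aux
variable {F : Type*} [Field F] {k : ℕ}

lemma reversal_flip (B : Matrix (Fin k) (Fin k) F)
    (hB : ∀ a b, B b a = - B a b) (σ : Equiv.Perm (Fin k)) (i₀ : Fin k)
    (hodd : ¬ Even ((σ.cycleOf i₀).support.card)) :
    (∏ i, B i ((σ * (σ.cycleOf i₀)⁻¹ * (σ.cycleOf i₀)⁻¹) i)) = - ∏ i, B i (σ i) ∧
    Equiv.Perm.sign (σ * (σ.cycleOf i₀)⁻¹ * (σ.cycleOf i₀)⁻¹) = Equiv.Perm.sign σ ∧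
    σ * (σ.cycleOf i₀)⁻¹ * (σ.cycleOf i₀)⁻¹ ≠ σ := by
  classical
  have hfp0 : σ i₀ ≠ i₀ := by
    intro hx
    apply hodd
    rw [(Equiv.Perm.cycleOf_eq_one_iff σ).2 hx]
    simp
  obtain ⟨h1, h2, h3, h4⟩ := reversal_spec σ i₀ hfp0
  set c := σ.cycleOf i₀ with hc
  have hci : c.IsCycle := Equiv.Perm.isCycle_cycleOf σ hfp0
  have hoddcard : Odd c.support.card := Nat.not_even_iff_odd.1 hodd
  have hmemiff : ∀ x, x ∈ c.support ↔ σ.SameCycle i₀ x := by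
    intro x
    rw [hc, Equiv.Perm.mem_support_cycleOf_iff]
    exact ⟨fun ⟨ha, _⟩ => ha, fun ha => ⟨ha, Equiv.Perm.mem_support.2 hfp0⟩⟩
  have hc_apply : ∀ x ∈ c.support, c x = σ x := fun x hx =>
    Equiv.Perm.SameCycle.cycleOf_apply ((hmemiff x).1 hx)
  have hcinv_mem : ∀ x ∈ c.support, c⁻¹ x ∈ c.support := by
    intro x hx
    rw [← Equiv.Perm.support_inv c] at hx ⊢
    exact Equiv.Perm.apply_mem_support.2 hx
  refine ⟨?_, ?_, ?_⟩
  · rw [← Finset.prod_mul_prod_compl c.support (fun i => B i ((σ * c⁻¹ * c⁻¹) i)),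
      ← Finset.prod_mul_prod_compl c.support (fun i => B i (σ i))]
    have e2 : ∏ i ∈ c.supportᶜ, B i ((σ * c⁻¹ * c⁻¹) i) = ∏ i ∈ c.supportᶜ, B i (σ i) :=
      Finset.prod_congr rfl (fun x hx => by rw [h2 x (Finset.mem_compl.1 hx)])
    have e1 : ∏ i ∈ c.support, B i ((σ * c⁻¹ * c⁻¹) i) = - ∏ i ∈ c.support, B i (σ i) := by
      have s1 : ∏ i ∈ c.support, B i ((σ * c⁻¹ * c⁻¹) i) = ∏ i ∈ c.support, B i (c⁻¹ i) :=
        Finset.prod_congr rfl (fun x hx => by rw [h1 x hx])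
      have s2 : ∏ i ∈ c.support, B i (c⁻¹ i) = ∏ i ∈ c.support, (-1 : F) * B (c⁻¹ i) i :=
        Finset.prod_congr rfl (fun x hx => by rw [hB (c⁻¹ x) x]; ring)
      have s3 : ∏ i ∈ c.support, ((-1 : F) * B (c⁻¹ i) i)
          = (-1 : F) ^ c.support.card * ∏ i ∈ c.support, B (c⁻¹ i) i := by
        rw [Finset.prod_mul_distrib, Finset.prod_const]
      have s4 : ∏ i ∈ c.support, B (c⁻¹ i) i = ∏ i ∈ c.support, B i (c i) := by
        refine Finset.prod_nbij' (fun x => c⁻¹ x) (fun y => c y) ?_ ?_ ?_ ?_ ?_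
        · exact fun a ha => hcinv_mem a ha
        · intro a ha
          exact Equiv.Perm.apply_mem_support.2 ha
        · intro a _; exact Equiv.Perm.apply_inv_self c a
        · intro a _; exact Equiv.Perm.inv_apply_self c a
        · intro a _
          rw [Equiv.Perm.apply_inv_self]
      have s5 : ∏ i ∈ c.support, B i (c i) = ∏ i ∈ c.support, B i (σ i) :=
        Finset.prod_congr rfl (fun x hx => by rw [hc_apply x hx])
      rw [s1, s2, s3, s4, s5, hoddcard.neg_one_pow, neg_one_mul]
    rw [e1, e2]
    ring
  · rw [_root_.map_mul, _root_.map_mul, Equiv.Perm.sign_inv, mul_assoc, Int.units_mul_self, mul_one]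
  · intro heq
    have hcc : c⁻¹ * c⁻¹ = 1 := by
      have := mul_left_cancel (a := σ) (b := c⁻¹ * c⁻¹) (c := 1)
        (by rw [← mul_assoc, heq, mul_one])
      exact this
    have hc2 : c * c = 1 := by
      have := congrArg (·⁻¹) hcc
      simpa [_root_.mul_inv_rev] using this
    have hdvd : orderOf c ∣ 2 := orderOf_dvd_iff_pow_eq_one.2 (by rw [pow_two]; exact hc2)
    rw [hci.orderOf] at hdvd
    have hle : c.support.card ≤ 2 := Nat.le_of_dvd (by norm_num) hdvd
    have hne1 : c.support.card ≠ 1 := Equiv.Perm.card_support_ne_one c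
    have : c.support.card % 2 = 1 := Nat.odd_iff.1 hoddcard
    omega

lemma exists_even_perm (B : Matrix (Fin k) (Fin k) F)
    (hB : ∀ a b, B b a = - B a b) (hdiag : ∀ i, B i i = 0) (hdet : B.det ≠ 0) :
    ∃ σ : Equiv.Perm (Fin k), (∀ x, B x (σ x) ≠ 0) ∧ (∀ x, σ x ≠ x) ∧
      (∀ x, Even ((σ.cycleOf x).support.card)) := by
  classical
  by_contra hcon
  push_neg at hcon
  apply hdet
  rw [← Matrix.det_transpose, Matrix.det_apply']
  simp only [Matrix.transpose_apply]
  rw [← Finset.sum_filter_add_sum_filter_not Finset.univ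
      (fun σ : Equiv.Perm (Fin k) => ∏ i, B i (σ i) ≠ 0)
      (fun σ => ((Equiv.Perm.sign σ : ℤ) : F) * ∏ i, B i (σ i))]
  have hzero : ∑ σ ∈ Finset.univ.filter
      (fun σ : Equiv.Perm (Fin k) => ¬ (∏ i, B i (σ i) ≠ 0)),
      ((Equiv.Perm.sign σ : ℤ) : F) * ∏ i, B i (σ i) = 0 := by
    apply Finset.sum_eq_zero
    intro σ hσ
    have := (Finset.mem_filter.1 hσ).2
    rw [not_not] at this
    rw [this, mul_zero]
  rw [hzero, add_zero]
  -- facts about members of the filter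
  have hent : ∀ σ : Equiv.Perm (Fin k), (∏ i, B i (σ i) ≠ 0) → ∀ x, B x (σ x) ≠ 0 := by
    intro σ hσ x
    exact Finset.prod_ne_zero_iff.1 hσ x (Finset.mem_univ x)
  have hfp : ∀ σ : Equiv.Perm (Fin k), (∏ i, B i (σ i) ≠ 0) → ∀ x, σ x ≠ x := by
    intro σ hσ x hx
    have := hent σ hσ x
    rw [hx] at this
    exact this (hdiag x)
  have hDne : ∀ σ : Equiv.Perm (Fin k), σ ∈ Finset.univ.filter
      (fun σ : Equiv.Perm (Fin k) => ∏ i, B i (σ i) ≠ 0) →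
      (Finset.univ.filter (fun x : Fin k =>
        ¬ Even ((σ.cycleOf x).support.card))).Nonempty := by
    intro σ hσ
    have hσ' := (Finset.mem_filter.1 hσ).2
    obtain ⟨x, hx⟩ := hcon σ (hent σ hσ') (hfp σ hσ')
    exact ⟨x, Finset.mem_filter.2 ⟨Finset.mem_univ x, hx⟩⟩
  refine Finset.sum_involution
    (fun σ hσ => σ * (σ.cycleOf ((Finset.univ.filter (fun x : Fin k =>
        ¬ Even ((σ.cycleOf x).support.card))).min' (hDne σ hσ)))⁻¹
      * (σ.cycleOf ((Finset.univ.filter (fun x : Fin k =>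
        ¬ Even ((σ.cycleOf x).support.card))).min' (hDne σ hσ)))⁻¹)
    ?_ ?_ ?_ ?_
  · intro σ hσ
    have hmin := Finset.min'_mem _ (hDne σ hσ)
    have hodd := (Finset.mem_filter.1 hmin).2
    obtain ⟨hp, hs, -⟩ := reversal_flip B hB σ _ hodd
    rw [hp, hs]
    ring
  · intro σ hσ _
    have hmin := Finset.min'_mem _ (hDne σ hσ)
    have hodd := (Finset.mem_filter.1 hmin).2
    exact (reversal_flip B hB σ _ hodd).2.2
  · intro σ hσ
    have hmin := Finset.min'_mem _ (hDne σ hσ)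
    have hodd := (Finset.mem_filter.1 hmin).2
    obtain ⟨hp, -, -⟩ := reversal_flip B hB σ _ hodd
    refine Finset.mem_filter.2 ⟨Finset.mem_univ _, ?_⟩
    rw [hp]
    exact neg_ne_zero.2 (Finset.mem_filter.1 hσ).2
  · intro σ hσ
    -- g (g σ) = σ
    have hmin := Finset.min'_mem _ (hDne σ hσ)
    have hodd := (Finset.mem_filter.1 hmin).2
    set i₀ := (Finset.univ.filter (fun x : Fin k =>
        ¬ Even ((σ.cycleOf x).support.card))).min' (hDne σ hσ) with hi₀
    set c := σ.cycleOf i₀ with hc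
    have hfp0 : σ i₀ ≠ i₀ := by
      intro hx
      apply hodd
      have hone : c = 1 := by rw [hc]; exact (Equiv.Perm.cycleOf_eq_one_iff σ).2 hx
      rw [hone]
      simp
    obtain ⟨-, -, h3, h4⟩ := reversal_spec σ i₀ hfp0
    -- the odd filter sets agree
    have hsame : (Finset.univ.filter (fun x : Fin k =>
        ¬ Even (((σ * c⁻¹ * c⁻¹).cycleOf x).support.card)))
        = (Finset.univ.filter (fun x : Fin k =>
        ¬ Even ((σ.cycleOf x).support.card))) := by
      apply Finset.filter_congr
      intro x _
      rw [h3 x]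
    have hminmin : ∀ (s t : Finset (Fin k)) (hs : s.Nonempty) (ht : t.Nonempty), s = t →
        s.min' hs = t.min' ht := by rintro s t hs ht rfl; rfl
    have hkey : ∀ hne : (Finset.univ.filter (fun x : Fin k =>
        ¬ Even (((σ * c⁻¹ * c⁻¹).cycleOf x).support.card))).Nonempty,
        (Finset.univ.filter (fun x : Fin k =>
        ¬ Even (((σ * c⁻¹ * c⁻¹).cycleOf x).support.card))).min' hne = i₀ :=
      fun hne => (hminmin _ _ hne (hDne σ hσ) hsame).trans hi₀.symm
    rw [← hc] at h4
    show (σ * c⁻¹ * c⁻¹) * ((σ * c⁻¹ * c⁻¹).cycleOf ((Finset.univ.filter (fun x : Fin k =>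
        ¬ Even (((σ * c⁻¹ * c⁻¹).cycleOf x).support.card))).min' _))⁻¹
      * ((σ * c⁻¹ * c⁻¹).cycleOf ((Finset.univ.filter (fun x : Fin k =>
        ¬ Even (((σ * c⁻¹ * c⁻¹).cycleOf x).support.card))).min' _))⁻¹ = σ
    rw [hkey, h4]
    group
end Aux

lemma matching_of_perm {F : Type*} [Field F] {n k : ℕ} (A : Matrix (Fin n) (Fin n) F)
    (ι : Fin k → Fin n) (hι : Function.Injective ι) (σ : Equiv.Perm (Fin k))
    (hfp : ∀ x, σ x ≠ x) (heven : ∀ x, Even ((σ.cycleOf x).support.card))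
    (hσ : ∀ x, A (ι x) (ι (σ x)) ≠ 0) :
    ∃ M : Finset (Sym2 (Fin n)),
      (∀ e ∈ M, ∃ i j : Fin n, i ≠ j ∧ A i j ≠ 0 ∧ e = Sym2.mk i j) ∧
      IsGraphMatching M ∧ 2 * M.card = k := by
  classical
  obtain ⟨π, hinv, hne, hedge⟩ := parity_involution σ hfp heven
  refine ⟨Finset.image (fun x => Sym2.mk (ι x) (ι (π x))) Finset.univ, ?_, ?_, ?_⟩
  · intro e he
    obtain ⟨x, -, rfl⟩ := Finset.mem_image.1 he
    rcases hedge x with h | h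
    · exact ⟨ι x, ι (π x), hι.ne (fun hc => hfp x (h ▸ hc).symm), h ▸ hσ x, rfl⟩
    · refine ⟨ι (π x), ι x, hι.ne (hne x), ?_, Sym2.eq_swap⟩
      have := hσ (π x); rwa [h] at this
  · intro e he f hf hef x hxe hxf
    obtain ⟨a, -, rfl⟩ := Finset.mem_image.1 he
    obtain ⟨b, -, rfl⟩ := Finset.mem_image.1 hf
    apply hef
    rcases Sym2.mem_iff.1 hxe with h1 | h1 <;> rcases Sym2.mem_iff.1 hxf with h2 | h2
    · rw [hι (h1.symm.trans h2)]
    · have hab : a = π b := hι (h1.symm.trans h2)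
      have : π a = b := by rw [hab, hinv]
      rw [hab, ← this, hab, hinv]
      exact Sym2.eq_swap
    · have hab : π a = b := hι (h1.symm.trans h2)
      rw [← hab, hinv]
      exact Sym2.eq_swap
    · have : a = b := by
        have := hι (h1.symm.trans h2)
        have := congrArg π this
        rwa [hinv, hinv] at this
      rw [this]
  · have hcard := Finset.card_eq_sum_card_image (fun x => Sym2.mk (ι x) (ι (π x)))
      (Finset.univ : Finset (Fin k))
    have hfib : ∀ e ∈ Finset.image (fun x => Sym2.mk (ι x) (ι (π x))) Finset.univ,
        (Finset.univ.filter (fun z => Sym2.mk (ι z) (ι (π z)) = e)).card = 2 := by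
      intro e he
      obtain ⟨a, -, rfl⟩ := Finset.mem_image.1 he
      have : Finset.univ.filter (fun z => Sym2.mk (ι z) (ι (π z)) = Sym2.mk (ι a) (ι (π a)))
          = {a, π a} := by
        ext z
        simp only [Finset.mem_filter, Finset.mem_univ, true_and, Finset.mem_insert,
          Finset.mem_singleton, Sym2.eq_iff]
        constructor
        · rintro (⟨h1, -⟩ | ⟨h1, -⟩)
          · exact Or.inl (hι h1)
          · exact Or.inr (hι h1)
        · rintro (rfl | rfl)
          · exact Or.inl ⟨rfl, rfl⟩
          · exact Or.inr ⟨rfl, by rw [hinv]⟩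
      rw [this, Finset.card_pair (Ne.symm (hne a))]
    rw [Finset.sum_congr rfl hfib, Finset.sum_const, smul_eq_mul] at hcard
    simp only [Finset.card_univ, Fintype.card_fin] at hcard
    omega

lemma exists_principal {F : Type*} [Field F] {n : ℕ} (A : Matrix (Fin n) (Fin n) F)
    (hA : ∀ a b, A b a = - A a b) :
    ∃ (r : ℕ) (ι : Fin r → Fin n), Function.Injective ι ∧ r = A.rank ∧
      (A.submatrix ι ι).det ≠ 0 := by
  classical
  obtain ⟨b, hbsub, hbspan, hbind⟩ := exists_linearIndependent F (Set.range Aᵀ)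
  have hbfin : b.Finite := (Set.finite_range Aᵀ).subset hbsub
  haveI : Fintype b := hbfin.fintype
  have hch : ∀ v : b, ∃ j : Fin n, Aᵀ j = v := fun v => hbsub v.2
  choose f hf using hch
  set m := Fintype.card b with hm
  set e : Fin m ≃ b := (Fintype.equivFin b).symm with he
  set ι : Fin m → Fin n := fun a => f (e a) with hι
  have hcols : ∀ a, Aᵀ (ι a) = (e a : Fin n → F) := fun a => hf (e a)
  have hinj : Function.Injective ι := by
    intro a a' hh
    apply e.injective
    apply Subtype.ext
    rw [← hcols a, ← hcols a', hh]
  have hind : LinearIndependent F (fun a : Fin m => Aᵀ (ι a)) := by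
    have h1 := hbind.comp e e.injective
    have : (fun a : Fin m => Aᵀ (ι a)) = fun a : Fin m => ((e a : Fin n → F)) := by
      funext a; rw [hcols a]
    rw [this]
    exact h1
  have hrange : Set.range (fun a : Fin m => Aᵀ (ι a)) = b := by
    ext v
    constructor
    · rintro ⟨a, rfl⟩
      show Aᵀ (ι a) ∈ b
      rw [hcols a]; exact (e a).2
    · intro hv
      refine ⟨e.symm ⟨v, hv⟩, ?_⟩
      show Aᵀ (ι (e.symm ⟨v, hv⟩)) = v
      rw [hcols, Equiv.apply_symm_apply]
  have hrank : m = A.rank := by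
    rw [Matrix.rank_eq_finrank_span_cols, Matrix.col, ← hbspan]
    have : Submodule.span F b = Submodule.span F (Set.range (fun a : Fin m => Aᵀ (ι a))) := by
      rw [hrange]
    rw [this, finrank_span_eq_card hind, Fintype.card_fin]
  have hspanmem : ∀ j, Aᵀ j ∈ Submodule.span F (Set.range (fun a : Fin m => Aᵀ (ι a))) := by
    intro j
    rw [hrange, hbspan]
    exact subset_span (Set.mem_range_self j)
  refine ⟨m, ι, hinj, hrank, ?_⟩
  intro hdet
  obtain ⟨v, hv0, hmv⟩ := Matrix.exists_mulVec_eq_zero_iff.2 hdet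
  set w : Fin n → F := ∑ a : Fin m, v a • Aᵀ (ι a) with hw
  have hwapp : ∀ i, w i = ∑ a : Fin m, v a * A i (ι a) := by
    intro i
    rw [hw]
    simp [Finset.sum_apply, Matrix.transpose_apply]
  have hwι : ∀ t, w (ι t) = 0 := by
    intro t
    rw [hwapp]
    have := congrFun hmv t
    simp only [Matrix.mulVec, dotProduct, Matrix.submatrix_apply, Pi.zero_apply] at this
    rw [← this]
    apply Finset.sum_congr rfl
    intro a _
    ring
  have hwzero : ∀ i, w i = 0 := by
    intro i
    obtain ⟨ec, hec⟩ := mem_span_range_iff_exists_fun F |>.1 (hspanmem i)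
    have hAi : ∀ a, A (ι a) i = ∑ t : Fin m, ec t * A (ι a) (ι t) := by
      intro a
      have := congrFun hec (ι a)
      simp only [Finset.sum_apply, Pi.smul_apply, Matrix.transpose_apply, smul_eq_mul] at this
      rw [← this]
    have step1 : w i = - ∑ a : Fin m, v a * A (ι a) i := by
      rw [hwapp]
      rw [← Finset.sum_neg_distrib]
      apply Finset.sum_congr rfl
      intro a _
      rw [hA (ι a) i]
      ring
    rw [step1]
    have hinner : ∀ t, ∑ a : Fin m, v a * A (ι a) (ι t) = 0 := by
      intro t
      have h1 : ∑ a : Fin m, v a * A (ι a) (ι t) = - ∑ a : Fin m, v a * A (ι t) (ι a) := by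
        rw [← Finset.sum_neg_distrib]
        apply Finset.sum_congr rfl
        intro a _
        rw [hA (ι t) (ι a)]
        ring
      rw [h1, ← hwapp (ι t), hwι t, neg_zero]
    have hfinal : ∑ a : Fin m, v a * A (ι a) i = 0 := by
      calc ∑ a : Fin m, v a * A (ι a) i
          = ∑ a : Fin m, ∑ t : Fin m, v a * (ec t * A (ι a) (ι t)) := by
            apply Finset.sum_congr rfl
            intro a _
            rw [hAi a, Finset.mul_sum]
        _ = ∑ t : Fin m, ∑ a : Fin m, v a * (ec t * A (ι a) (ι t)) := Finset.sum_comm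
        _ = ∑ t : Fin m, ec t * ∑ a : Fin m, v a * A (ι a) (ι t) := by
            apply Finset.sum_congr rfl
            intro t _
            rw [Finset.mul_sum]
            apply Finset.sum_congr rfl
            intro a _
            ring
        _ = 0 := by simp [hinner]
    rw [hfinal, neg_zero]
  have hwz : w = 0 := funext fun i => hwzero i
  rw [hw] at hwz
  have hvz := Fintype.linearIndependent_iff.1 hind v hwz
  exact hv0 (funext hvz)

lemma lower_bound {F : Type*} [Field F] {n : ℕ} (P : Finset (Fin n × Fin n))
    (hne : ∀ p ∈ P, p.1 ≠ p.2)
    (hdisj : ∀ p ∈ P, ∀ q ∈ P, p ≠ q →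
      p.1 ≠ q.1 ∧ p.1 ≠ q.2 ∧ p.2 ≠ q.1 ∧ p.2 ≠ q.2) :
    ∃ A : Matrix (Fin n) (Fin n) F, (Aᵀ = -A ∧ ∀ i, A i i = 0) ∧
      (∀ i j, A i j ≠ 0 → (i, j) ∈ P ∨ (j, i) ∈ P) ∧ A.rank = 2 * P.card := by
  classical
  have hcross : ∀ p ∈ P, ∀ q ∈ P, p.1 ≠ q.2 := by
    intro p hp q hq
    by_cases hpq : p = q
    · subst hpq; exact hne p hp
    · exact (hdisj p hp q hq hpq).2.1
  set A : Matrix (Fin n) (Fin n) F := Matrix.of (fun i j =>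
    (if (i, j) ∈ P then (1 : F) else 0) - (if (j, i) ∈ P then 1 else 0)) with hAdef
  have hAapp : ∀ i j, A i j =
      (if (i, j) ∈ P then (1 : F) else 0) - (if (j, i) ∈ P then 1 else 0) := fun i j => rfl
  -- column computations
  have hcol1 : ∀ p ∈ P, Aᵀ p.2 = Pi.single p.1 (1 : F) := by
    intro p hp
    funext i
    rw [Matrix.transpose_apply, hAapp, Pi.single_apply]
    have h2 : ¬ (p.2, i) ∈ P := fun hc => hcross (p.2, i) hc p hp rfl
    rw [if_neg h2, sub_zero]
    by_cases h1 : (i, p.2) ∈ P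
    · have : (i, p.2) = p := by
        by_contra hc
        exact (hdisj _ h1 p hp hc).2.2.2 rfl
      have : i = p.1 := by rw [← this]
      rw [if_pos h1, if_pos this]
    · rw [if_neg h1, if_neg (fun hc : i = p.1 => h1 (by rw [hc]; exact hp))]
  have hcol2 : ∀ p ∈ P, Aᵀ p.1 = - Pi.single p.2 (1 : F) := by
    intro p hp
    funext i
    rw [Matrix.transpose_apply, hAapp, Pi.neg_apply, Pi.single_apply]
    have h2 : ¬ (i, p.1) ∈ P := fun hc => hcross p hp (i, p.1) hc rfl
    rw [if_neg h2, zero_sub]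
    by_cases h1 : (p.1, i) ∈ P
    · have heq : (p.1, i) = p := by
        by_contra hc
        exact (hdisj _ h1 p hp hc).1 rfl
      have : i = p.2 := by rw [← heq]
      rw [if_pos h1, if_pos this]
    · rw [if_neg h1, if_neg (fun hc : i = p.2 => h1 (by rw [hc]; exact hp))]
  have hcol3 : ∀ j, (¬ ∃ p ∈ P, p.2 = j) → (¬ ∃ p ∈ P, p.1 = j) → Aᵀ j = 0 := by
    intro j hn2 hn1
    funext i
    rw [Matrix.transpose_apply, hAapp]
    rw [if_neg (fun hc => hn2 ⟨(i, j), hc, rfl⟩), if_neg (fun hc => hn1 ⟨(j, i), hc, rfl⟩)]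
    simp
  refine ⟨A, ⟨?_, ?_⟩, ?_, ?_⟩
  · funext i j
    rw [Matrix.transpose_apply, hAapp, Matrix.neg_apply, hAapp]
    ring
  · intro i
    rw [hAapp]; ring
  · intro i j hij
    by_contra hc
    push_neg at hc
    rw [hAapp, if_neg hc.1, if_neg hc.2, sub_zero] at hij
    exact hij rfl
  · -- rank computation
    set S : Finset (Fin n) := P.image Prod.fst ∪ P.image Prod.snd with hS
    have hfst_mem : ∀ p ∈ P, p.1 ∈ S := fun p hp =>
      Finset.mem_union_left _ (Finset.mem_image_of_mem _ hp)
    have hsnd_mem : ∀ p ∈ P, p.2 ∈ S := fun p hp =>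
      Finset.mem_union_right _ (Finset.mem_image_of_mem _ hp)
    have hfamind : LinearIndependent F (fun a : ↥S => (Pi.single (a : Fin n) (1 : F) : Fin n → F)) := by
      have h1 := (Pi.basisFun F (Fin n)).linearIndependent.comp
        (fun a : ↥S => (a : Fin n)) Subtype.val_injective
      have heq : (fun a : ↥S => (Pi.single (a : Fin n) (1 : F) : Fin n → F))
          = (⇑(Pi.basisFun F (Fin n)) ∘ fun a : ↥S => (a : Fin n)) := by
        funext a
        simp [Pi.basisFun_apply]
      rw [heq]
      exact h1
    have hspan : span F (Set.range Aᵀ)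
        = span F (Set.range (fun a : ↥S => (Pi.single (a : Fin n) (1 : F) : Fin n → F))) := by
      apply le_antisymm
      · rw [span_le]
        rintro v ⟨j, rfl⟩
        by_cases h1 : ∃ p ∈ P, p.2 = j
        · obtain ⟨p, hp, hpj⟩ := h1
          have := hcol1 p hp
          rw [hpj] at this
          rw [this]
          exact subset_span ⟨⟨p.1, hfst_mem p hp⟩, rfl⟩
        · by_cases h2 : ∃ p ∈ P, p.1 = j
          · obtain ⟨p, hp, hpj⟩ := h2
            have := hcol2 p hp
            rw [hpj] at this
            rw [this]
            exact neg_mem (subset_span ⟨⟨p.2, hsnd_mem p hp⟩, rfl⟩)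
          · rw [hcol3 j h1 h2]
            exact zero_mem _
      · rw [span_le]
        rintro v ⟨a, rfl⟩
        show (Pi.single (a : Fin n) (1 : F) : Fin n → F) ∈ span F (Set.range Aᵀ)
        have ha2 : (a : Fin n) ∈ P.image Prod.fst ∪ P.image Prod.snd := by
          rw [← hS]; exact a.2
        rcases Finset.mem_union.1 ha2 with ha | ha
        · obtain ⟨p, hp, hpa⟩ := Finset.mem_image.1 ha
          have := hcol1 p hp
          rw [hpa] at this
          rw [← this]
          exact subset_span (Set.mem_range_self _)
        · obtain ⟨p, hp, hpa⟩ := Finset.mem_image.1 ha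
          have := hcol2 p hp
          rw [hpa] at this
          have : Pi.single (a : Fin n) (1 : F) = - Aᵀ p.1 := by rw [this, neg_neg]
          rw [this]
          exact neg_mem (subset_span (Set.mem_range_self _))
    have hcardS : S.card = 2 * P.card := by
      have hdisjSS : Disjoint (P.image Prod.fst) (P.image Prod.snd) := by
        rw [Finset.disjoint_left]
        rintro x hx1 hx2
        obtain ⟨p, hp, hpx⟩ := Finset.mem_image.1 hx1
        obtain ⟨q, hq, hqx⟩ := Finset.mem_image.1 hx2
        exact hcross p hp q hq (hpx.trans hqx.symm)
      have hinj1 : Set.InjOn Prod.fst (P : Set (Fin n × Fin n)) := by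
        intro p hp q hq hpq
        by_contra hc
        exact (hdisj p hp q hq hc).1 hpq
      have hinj2 : Set.InjOn Prod.snd (P : Set (Fin n × Fin n)) := by
        intro p hp q hq hpq
        by_contra hc
        exact (hdisj p hp q hq hc).2.2.2 hpq
      rw [hS, Finset.card_union_of_disjoint hdisjSS,
        Finset.card_image_of_injOn hinj1, Finset.card_image_of_injOn hinj2]
      ring
    rw [Matrix.rank_eq_finrank_span_cols]
    show Module.finrank F (span F (Set.range Aᵀ)) = 2 * P.card
    rw [hspan, finrank_span_eq_card hfamind, Fintype.card_coe, hcardS]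


theorem stmt9 {F : Type*} [Field F] {n : ℕ} (G : Set (Sym2 (Fin n)))
    (hG : ∀ e ∈ G, ¬ e.IsDiag) :
    sSup {r | ∃ A : Matrix (Fin n) (Fin n) F, IsAlt A ∧
        (∀ i j, i ≠ j → Sym2.mk i j ∉ G → A i j = 0) ∧ A.rank = r}
      = 2 * nuG G := by
  classical
  have hNS0 : (0 : ℕ) ∈ {m | ∃ M : Finset (Sym2 (Fin n)), ↑M ⊆ G ∧ IsGraphMatching M ∧
      M.card = m} := ⟨∅, by simp, by intro e he; exact absurd he (Finset.notMem_empty e), rfl⟩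
  have hNSbdd : BddAbove {m | ∃ M : Finset (Sym2 (Fin n)), ↑M ⊆ G ∧ IsGraphMatching M ∧
      M.card = m} := by
    refine ⟨Fintype.card (Sym2 (Fin n)), ?_⟩
    rintro m ⟨M, -, -, rfl⟩
    exact Finset.card_le_univ M
  have hnu_mem : nuG G ∈ {m | ∃ M : Finset (Sym2 (Fin n)), ↑M ⊆ G ∧ IsGraphMatching M ∧
      M.card = m} := Nat.sSup_mem ⟨0, hNS0⟩ hNSbdd
  have hcard_le : ∀ M : Finset (Sym2 (Fin n)), ↑M ⊆ G → IsGraphMatching M →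
      M.card ≤ nuG G := fun M h1 h2 => le_csSup hNSbdd ⟨M, h1, h2, rfl⟩
  have hub : ∀ r ∈ {r | ∃ A : Matrix (Fin n) (Fin n) F, IsAlt A ∧
      (∀ i j, i ≠ j → Sym2.mk i j ∉ G → A i j = 0) ∧ A.rank = r}, r ≤ 2 * nuG G := by
    rintro r ⟨A, ⟨hAt, hAd⟩, hsupp, rfl⟩
    have hB : ∀ a b, A b a = - A a b := by
      intro a b
      have h := congrFun (congrFun hAt a) b
      simpa [Matrix.transpose_apply, Matrix.neg_apply] using h
    obtain ⟨r', ι, hinj, hr', hdet⟩ := exists_principal A hB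
    obtain ⟨σ, hent, hfp, heven⟩ := exists_even_perm (A.submatrix ι ι)
      (fun a b => hB (ι a) (ι b)) (fun i => hAd (ι i)) hdet
    obtain ⟨M, hMdesc, hMmatch, hMcard⟩ := matching_of_perm A ι hinj σ hfp heven
      (fun x => hent x)
    have hMG : ↑M ⊆ G := by
      intro e he
      obtain ⟨i, j, hij, hA0, rfl⟩ := hMdesc e he
      by_contra hc
      exact hA0 (hsupp i j hij hc)
    have hle := hcard_le M hMG hMmatch
    rw [← hr']
    omega
  have hmem : 2 * nuG G ∈ {r | ∃ A : Matrix (Fin n) (Fin n) F, IsAlt A ∧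
      (∀ i j, i ≠ j → Sym2.mk i j ∉ G → A i j = 0) ∧ A.rank = r} := by
    obtain ⟨M, hMG, hMm, hMc⟩ := hnu_mem
    set P : Finset (Fin n × Fin n) := M.image Quot.out with hP
    have hout : ∀ p ∈ P, Sym2.mk p.1 p.2 ∈ M := by
      intro p hp
      obtain ⟨e, he, rfl⟩ := Finset.mem_image.1 hp
      rw [show Sym2.mk (Quot.out e).1 (Quot.out e).2 = e from Quot.out_eq e]
      exact he
    have hrep : ∀ p ∈ P, Quot.out (Sym2.mk p.1 p.2) = p := by
      intro p hp
      obtain ⟨e, he, rfl⟩ := Finset.mem_image.1 hp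
      rw [show Sym2.mk (Quot.out e).1 (Quot.out e).2 = e from Quot.out_eq e]
    have hPG : ∀ p ∈ P, Sym2.mk p.1 p.2 ∈ G := fun p hp => hMG (hout p hp)
    have hPne : ∀ p ∈ P, p.1 ≠ p.2 := by
      intro p hp hc
      exact hG _ (hPG p hp) (Sym2.mk_isDiag_iff.2 hc)
    have hPdisj : ∀ p ∈ P, ∀ q ∈ P, p ≠ q →
        p.1 ≠ q.1 ∧ p.1 ≠ q.2 ∧ p.2 ≠ q.1 ∧ p.2 ≠ q.2 := by
      intro p hp q hq hpq
      have hmkne : Sym2.mk p.1 p.2 ≠ Sym2.mk q.1 q.2 := by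
        intro hc
        exact hpq (by rw [← hrep p hp, hc, hrep q hq])
      have hmatch := hMm (Sym2.mk p.1 p.2) (hout p hp) (Sym2.mk q.1 q.2) (hout q hq) hmkne
      have hp1 : p.1 ∈ Sym2.mk p.1 p.2 := Sym2.mem_mk_left p.1 p.2
      have hp2 : p.2 ∈ Sym2.mk p.1 p.2 := Sym2.mem_mk_right p.1 p.2
      have hq1 : q.1 ∈ Sym2.mk q.1 q.2 := Sym2.mem_mk_left q.1 q.2
      have hq2 : q.2 ∈ Sym2.mk q.1 q.2 := Sym2.mem_mk_right q.1 q.2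
      exact ⟨fun hc => hmatch p.1 hp1 (hc ▸ hq1), fun hc => hmatch p.1 hp1 (hc ▸ hq2),
        fun hc => hmatch p.2 hp2 (hc ▸ hq1), fun hc => hmatch p.2 hp2 (hc ▸ hq2)⟩
    have hPcard : P.card = M.card := by
      rw [hP]
      apply Finset.card_image_of_injOn
      intro e _ f _ h
      rw [← Quot.out_eq e, ← Quot.out_eq f]
      exact congrArg _ h
    obtain ⟨A, ⟨hA1, hA2⟩, hAsupp, hArank⟩ := lower_bound (F := F) P hPne hPdisj
    refine ⟨A, ⟨hA1, hA2⟩, ?_, ?_⟩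
    · intro i j hij hnotin
      by_contra hA0
      rcases hAsupp i j hA0 with hp | hp
      · exact hnotin (hPG _ hp)
      · apply hnotin
        rw [show Sym2.mk i j = Sym2.mk j i from Sym2.eq_swap]
        exact hPG _ hp
    · rw [hArank, hPcard, hMc]
  apply le_antisymm
  · apply csSup_le
    · exact ⟨0, 0, ⟨by simp, fun i => rfl⟩, fun i j _ _ => rfl, Matrix.rank_zero⟩
    · exact hub
  · exact le_csSup ⟨2 * nuG G, hub⟩ hmem
end

section
/- Let F be a field with char F ≠ 2 and let W ≤ M_2(F) be a 2-dimensional subspace such that every A ∈ W has permanental rank at most 1 (i.e., the permanent of every A ∈ W is 0 and W ≠ 0). Then W = W_u or W = W_uᵗ for some nonzero u = (a,b) ∈ F², where W_u = {[[ax, ay],[-bx, by]] : x,y ∈ F}. -/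
open Matrix

lemma per_fin_two {F : Type*} [Field F] (A : Matrix (Fin 2) (Fin 2) F) :
    per A = A 0 0 * A 1 1 + A 0 1 * A 1 0 := by
  rw [per]
  rw [show (Finset.univ : Finset (Equiv.Perm (Fin 2))) = {1, Equiv.swap 0 1} by decide]
  rw [Finset.sum_pair (by decide)]
  simp [Fin.prod_univ_two, Equiv.swap_apply_def]

lemma prop_of {F : Type*} [Field F] {a b c d : F} (h : ¬(a = 0 ∧ b = 0)) (hd : a*d = b*c) :
    ∃ μ : F, c = μ*a ∧ d = μ*b := by
  by_cases ha : a = 0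
  · have hb : b ≠ 0 := fun hb => h ⟨ha, hb⟩
    subst ha
    refine ⟨d/b, ?_, by field_simp⟩
    have : b * c = 0 := by linear_combination -hd
    rcases mul_eq_zero.mp this with h' | h'
    · exact absurd h' hb
    · simp [h']
  · refine ⟨c/a, by field_simp, ?_⟩
    field_simp
    linear_combination hd

lemma collin {F : Type*} [Field F] {p0 p1 q0 q1 : F} (h : p0*q1 = p1*q0)
    (hne : ¬(p0 = 0 ∧ p1 = 0 ∧ q0 = 0 ∧ q1 = 0)) :
    ∃ d0 d1 α β : F, ¬(d0 = 0 ∧ d1 = 0) ∧ ¬(α = 0 ∧ β = 0) ∧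
      p0 = α*d0 ∧ p1 = α*d1 ∧ q0 = β*d0 ∧ q1 = β*d1 := by
  by_cases hp : p0 = 0 ∧ p1 = 0
  · exact ⟨q0, q1, 0, 1, fun hq => hne ⟨hp.1, hp.2, hq.1, hq.2⟩,
      by simp, by simp [hp.1], by simp [hp.2], by ring, by ring⟩
  · obtain ⟨μ, h1, h2⟩ := prop_of hp h
    exact ⟨p0, p1, 1, μ, hp, by simp, by ring, by ring, by linear_combination h1,
      by linear_combination h2⟩

lemma core {F : Type*} [Field F] {m0 m1 m2 m3 n0 n1 n2 n3 : F}
    (h1 : m0*m3 + m1*m2 = 0) (h2 : n0*n3 + n1*n2 = 0)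
    (h3 : m0*n3 + n0*m3 + m1*n2 + n1*m2 = 0)
    (hM : ¬(m0 = 0 ∧ m1 = 0 ∧ m2 = 0 ∧ m3 = 0))
    (hN : ¬(n0 = 0 ∧ n1 = 0 ∧ n2 = 0 ∧ n3 = 0)) :
    ∃ a b : F, ¬(a = 0 ∧ b = 0) ∧
      ((∃ x y x' y' : F, m0 = a*x ∧ m2 = -(b*x) ∧ m1 = a*y ∧ m3 = b*y ∧
          n0 = a*x' ∧ n2 = -(b*x') ∧ n1 = a*y' ∧ n3 = b*y') ∨
       (∃ x y x' y' : F, m0 = a*x ∧ m1 = -(b*x) ∧ m2 = a*y ∧ m3 = b*y ∧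
          n0 = a*x' ∧ n1 = -(b*x') ∧ n2 = a*y' ∧ n3 = b*y')) := by
  obtain ⟨d0, d1, α, β, hd, hαβ, e1, e2, e3, e4⟩ :=
    collin (p0 := m0) (p1 := -m2) (q0 := m1) (q1 := m3)
      (by linear_combination h1)
      (by rintro ⟨a1, a2, a3, a4⟩; exact hM ⟨a1, a3, neg_eq_zero.mp a2, a4⟩)
  obtain ⟨f0, f1, γ, δ, hf, hγδ, g1, g2, g3, g4⟩ :=
    collin (p0 := n0) (p1 := -n2) (q0 := n1) (q1 := n3)
      (by linear_combination h2)
      (by rintro ⟨a1, a2, a3, a4⟩; exact hN ⟨a1, a3, neg_eq_zero.mp a2, a4⟩)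
  have hm2 : m2 = -(α*d1) := by linear_combination -e2
  have hn2 : n2 = -(γ*f1) := by linear_combination -g2
  clear e2 g2 h1 h2 hM hN
  subst e1 e3 e4 g1 g3 g4 hm2 hn2
  have hfact : (α*δ - β*γ)*(d0*f1 - d1*f0) = 0 := by linear_combination h3
  rcases mul_eq_zero.mp hfact with hcase | hcase
  · have hαδ : α*δ = β*γ := by linear_combination hcase
    obtain ⟨μ, hμ1, hμ2⟩ := prop_of hαβ hαδ
    subst hμ1 hμ2
    exact ⟨α, -β, by simpa using hαβ, Or.inr ⟨d0, -d1, μ*f0, -(μ*f1),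
      by ring, by ring, by ring, by ring, by ring, by ring, by ring, by ring⟩⟩
  · have hde : d0*f1 = d1*f0 := by linear_combination hcase
    obtain ⟨μ, hμ1, hμ2⟩ := prop_of hd hde
    subst hμ1 hμ2
    exact ⟨d0, d1, hd, Or.inl ⟨α, β, γ*μ, δ*μ,
      by ring, by ring, by ring, by ring, by ring, by ring, by ring, by ring⟩⟩

lemma matrix_two_ext {F : Type*} [Field F] {A B : Matrix (Fin 2) (Fin 2) F}
    (h0 : A 0 0 = B 0 0) (h1 : A 0 1 = B 0 1) (h2 : A 1 0 = B 1 0) (h3 : A 1 1 = B 1 1) :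
    A = B := by
  rw [Matrix.eta_fin_two A, Matrix.eta_fin_two B, h0, h1, h2, h3]

lemma gen_col {F : Type*} [Field F] (a b x y : F) :
    x • !![a, 0; -b, 0] + y • !![0, a; 0, b] = !![a * x, a * y; -(b * x), b * y] := by
  ext i j
  fin_cases i <;> fin_cases j <;> simp [mul_comm]

lemma gen_row {F : Type*} [Field F] (a b x y : F) :
    x • !![a, -b; 0, 0] + y • !![0, 0; a, b] = (!![a * x, a * y; -(b * x), b * y])ᵀ := by
  ext i j
  fin_cases i <;> fin_cases j <;> simp [mul_comm]

lemma span_pair_finrank_le {F : Type*} [Field F] (E1 E2 : Matrix (Fin 2) (Fin 2) F) :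
    Module.finrank F ↥(Submodule.span F {E1, E2}) ≤ 2 := by
  classical
  calc Module.finrank F ↥(Submodule.span F ({E1, E2} : Set _))
      ≤ ({E1, E2} : Set _).toFinset.card := finrank_span_le_card _
    _ ≤ 2 := by
        rw [Set.toFinset_insert, Set.toFinset_singleton]
        exact (Finset.card_insert_le _ _).trans (by simp)

theorem stmt16 {F : Type*} [Field F] (hc : ringChar F ≠ 2)
    (W : Submodule F (Matrix (Fin 2) (Fin 2) F))
    (hdim : Module.finrank F W = 2)
    (hprk : ∀ A ∈ W, prk A ≤ 1) :
    ∃ a b : F, (a, b) ≠ (0, 0) ∧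
      ((W : Set (Matrix (Fin 2) (Fin 2) F))
          = {M | ∃ x y : F, M = !![a * x, a * y; -(b * x), b * y]} ∨
       (W : Set (Matrix (Fin 2) (Fin 2) F))
          = {M | ∃ x y : F, M = (!![a * x, a * y; -(b * x), b * y])ᵀ}) := by
  classical
  have hper0 : ∀ A ∈ W, A 0 0 * A 1 1 + A 0 1 * A 1 0 = 0 := by
    intro A hA
    by_contra hne
    have h1 := hprk A hA
    have hbdd : BddAbove {k | ∃ I J : Fin k → Fin 2, StrictMono I ∧ StrictMono J ∧
        per (A.submatrix I J) ≠ 0} := by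
      refine ⟨2, fun k hk => ?_⟩
      obtain ⟨I, _, hI, _, _⟩ := hk
      simpa using Fintype.card_le_of_injective I hI.injective
    have hmem : 2 ∈ {k | ∃ I J : Fin k → Fin 2, StrictMono I ∧ StrictMono J ∧
        per (A.submatrix I J) ≠ 0} := by
      refine ⟨id, id, strictMono_id, strictMono_id, ?_⟩
      rw [A.submatrix_id_id, per_fin_two]
      exact hne
    have h2 : 2 ≤ prk A := le_csSup hbdd hmem
    omega
  haveI : FiniteDimensional F W := inferInstance
  let bb := Module.finBasisOfFinrankEq F W hdim
  set M : Matrix (Fin 2) (Fin 2) F := ((bb 0 : W) : Matrix (Fin 2) (Fin 2) F) with hMdef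
  set N : Matrix (Fin 2) (Fin 2) F := ((bb 1 : W) : Matrix (Fin 2) (Fin 2) F) with hNdef
  have hMmem : M ∈ W := (bb 0).2
  have hNmem : N ∈ W := (bb 1).2
  have hMne : M ≠ 0 := fun h => bb.ne_zero 0 (Subtype.ext h)
  have hNne : N ≠ 0 := fun h => bb.ne_zero 1 (Subtype.ext h)
  have hrep : ∀ A ∈ W, ∃ c d : F, A = c • M + d • N := by
    intro A hA
    refine ⟨bb.repr ⟨A, hA⟩ 0, bb.repr ⟨A, hA⟩ 1, ?_⟩
    have h := bb.sum_repr ⟨A, hA⟩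
    rw [Fin.sum_univ_two] at h
    have h2 := congrArg (Subtype.val) h
    simp only [Submodule.coe_add, SetLike.val_smul] at h2
    exact h2.symm
  have h1 := hper0 M hMmem
  have h2 := hper0 N hNmem
  have h3 : M 0 0 * N 1 1 + N 0 0 * M 1 1 + M 0 1 * N 1 0 + N 0 1 * M 1 0 = 0 := by
    have h := hper0 (M + N) (W.add_mem hMmem hNmem)
    simp only [Matrix.add_apply] at h
    linear_combination h - h1 - h2
  have hMz : ¬(M 0 0 = 0 ∧ M 0 1 = 0 ∧ M 1 0 = 0 ∧ M 1 1 = 0) := by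
    rintro ⟨z0, z1, z2, z3⟩
    exact hMne (matrix_two_ext (B := 0) z0 z1 z2 z3)
  have hNz : ¬(N 0 0 = 0 ∧ N 0 1 = 0 ∧ N 1 0 = 0 ∧ N 1 1 = 0) := by
    rintro ⟨z0, z1, z2, z3⟩
    exact hNne (matrix_two_ext (B := 0) z0 z1 z2 z3)
  obtain ⟨a, b, hab, hcol | hrow⟩ := core h1 h2 h3 hMz hNz
  · -- column case
    obtain ⟨x, y, x', y', p1, p2, p3, p4, p5, p6, p7, p8⟩ := hcol
    refine ⟨a, b, fun h => hab ⟨congrArg Prod.fst h, congrArg Prod.snd h⟩, Or.inl ?_⟩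
    have hMform : M = !![a * x, a * y; -(b * x), b * y] :=
      matrix_two_ext (by simpa using p1) (by simpa using p3) (by simpa using p2)
        (by simpa using p4)
    have hNform : N = !![a * x', a * y'; -(b * x'), b * y'] :=
      matrix_two_ext (by simpa using p5) (by simpa using p7) (by simpa using p6)
        (by simpa using p8)
    have hWS : W ≤ Submodule.span F {!![a, 0; -b, 0], !![0, a; 0, b]} := by
      intro A hA
      obtain ⟨c, d, hcd⟩ := hrep A hA
      refine Submodule.mem_span_pair.mpr ⟨c * x + d * x', c * y + d * y', ?_⟩
      rw [gen_col, hcd, hMform, hNform]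
      refine matrix_two_ext ?_ ?_ ?_ ?_ <;> simp <;> ring
    have hSW : W = Submodule.span F {!![a, 0; -b, 0], !![0, a; 0, b]} :=
      Submodule.eq_of_le_of_finrank_le hWS (by rw [hdim]; exact span_pair_finrank_le _ _)
    rw [hSW]
    ext P
    simp only [SetLike.mem_coe, Set.mem_setOf_eq, Submodule.mem_span_pair]
    constructor
    · rintro ⟨u, v, huv⟩
      exact ⟨u, v, huv.symm.trans (gen_col a b u v)⟩
    · rintro ⟨u, v, huv⟩
      exact ⟨u, v, (gen_col a b u v).trans huv.symm⟩
  · -- row case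
    obtain ⟨x, y, x', y', p1, p2, p3, p4, p5, p6, p7, p8⟩ := hrow
    refine ⟨a, b, fun h => hab ⟨congrArg Prod.fst h, congrArg Prod.snd h⟩, Or.inr ?_⟩
    have htr : ∀ u v : F, (!![a * u, a * v; -(b * u), b * v])ᵀ
        = !![a * u, -(b * u); a * v, b * v] := by
      intro u v
      refine matrix_two_ext ?_ ?_ ?_ ?_ <;> simp
    have hMform : M = (!![a * x, a * y; -(b * x), b * y])ᵀ := by
      rw [htr]
      exact matrix_two_ext (by simpa using p1) (by simpa using p2) (by simpa using p3)
        (by simpa using p4)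
    have hNform : N = (!![a * x', a * y'; -(b * x'), b * y'])ᵀ := by
      rw [htr]
      exact matrix_two_ext (by simpa using p5) (by simpa using p6) (by simpa using p7)
        (by simpa using p8)
    have hWS : W ≤ Submodule.span F {!![a, -b; 0, 0], !![0, 0; a, b]} := by
      intro A hA
      obtain ⟨c, d, hcd⟩ := hrep A hA
      refine Submodule.mem_span_pair.mpr ⟨c * x + d * x', c * y + d * y', ?_⟩
      rw [gen_row, hcd, hMform, hNform, htr, htr, htr]
      refine matrix_two_ext ?_ ?_ ?_ ?_ <;> simp <;> ring
    have hSW : W = Submodule.span F {!![a, -b; 0, 0], !![0, 0; a, b]} :=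
      Submodule.eq_of_le_of_finrank_le hWS (by rw [hdim]; exact span_pair_finrank_le _ _)
    rw [hSW]
    ext P
    simp only [SetLike.mem_coe, Set.mem_setOf_eq, Submodule.mem_span_pair]
    constructor
    · rintro ⟨u, v, huv⟩
      exact ⟨u, v, huv.symm.trans (gen_row a b u v)⟩
    · rintro ⟨u, v, huv⟩
      exact ⟨u, v, (gen_row a b u v).trans huv.symm⟩
end
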